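/- arXiv:1710.07858 — 7 statements merged into one kernel-verified Lean document; each statement's English description precedes it below -/
import Mathlib

section
/- Let v be a strongly evanescent solution of the second-order gradient system (DS-2). Then the limit lim_{t→∞} ψ(v(t)) exists in ℝ, and for every t ≥ 0 one has |ψ(v(0)) − ψ(v(t))| ≤ ∫₀^t ‖v′(s)‖² ds. -/
open Filter MeasureTheory Set
open scoped RealInnerProductSpace

/-- Proposition 1 (i): if `v` is a strongly evanescent solution of the second-order
gradient system `v'' = ∇V(v)` with `V = ½‖∇ψ‖²`, then `lim_{t→∞} ψ(v t)` exists in `ℝ`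
and `|ψ(v 0) - ψ(v t)| ≤ ∫₀ᵗ ‖v'(s)‖² ds` for every `t ≥ 0`. -/
theorem stmt_3 {H : Type*} [NormedAddCommGroup H] [InnerProductSpace ℝ H] [CompleteSpace H]
    (ψ : H → ℝ) (hψ : ContDiff ℝ 2 ψ)
    (V : H → ℝ) (hV : V = fun x => (1/2 : ℝ) * ‖gradient ψ x‖ ^ 2)
    (v v' : ℝ → H)
    (hv : ∀ t ∈ Ici (0:ℝ), HasDerivWithinAt v (v' t) (Ici 0) t)
    (hv' : ∀ t ∈ Ici (0:ℝ), HasDerivWithinAt v' (gradient V (v t)) (Ici 0) t)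
    (hev : IntegrableOn (fun t => ‖v' t‖ ^ 2 + V (v t)) (Ioi 0)) :
    (∃ L : ℝ, Tendsto (fun t => ψ (v t)) atTop (nhds L)) ∧
      ∀ t ≥ (0:ℝ), |ψ (v 0) - ψ (v t)| ≤ ∫ s in (0:ℝ)..t, ‖v' s‖ ^ 2 := by
  have hvc : ContinuousOn v (Ici 0) := fun t ht => (hv t ht).continuousWithinAt
  have hv'c : ContinuousOn v' (Ici 0) := fun t ht => (hv' t ht).continuousWithinAt
  -- gradient ψ is C¹
  have hG : ContDiff ℝ 1 (gradient ψ) := by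
    have h1 : ContDiff ℝ 1 (fderiv ℝ ψ) := hψ.fderiv_right (by norm_num)
    exact ((InnerProductSpace.toDual ℝ H).symm.contDiff.comp h1 : )
  have hgradc : Continuous (gradient ψ) := hG.continuous
  have hVc1 : ContDiff ℝ 1 V := by
    rw [hV]; exact contDiff_const.mul (hG.norm_sq ℝ)
  have hVd : ∀ x, HasGradientAt V (gradient V x) x :=
    fun x => ((hVc1.differentiable one_ne_zero) x).hasGradientAt
  have hV0 : ∀ x, 0 ≤ V x := by intro x; rw [hV]; positivity
  -- chain rule
  have chain : ∀ (f : H → ℝ), (∀ x, HasGradientAt f (gradient f x) x) → ∀ t ∈ Ici (0:ℝ),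
      HasDerivWithinAt (fun s => f (v s)) ⟪gradient f (v t), v' t⟫ (Ici 0) t := by
    intro f hf t ht
    have := (hf (v t)).hasFDerivAt.comp_hasDerivWithinAt t (hv t ht)
    have h2 : HasDerivWithinAt (fun s => f (v s)) ((InnerProductSpace.toDual ℝ H (gradient f (v t))) (v' t)) (Ici 0) t := this
    simpa [InnerProductSpace.toDual_apply_apply] using h2
  -- energy is constant
  have hE : ∀ t ∈ Ici (0:ℝ), HasDerivWithinAt
      (fun s => ⟪v' s, v' s⟫ - 2 * V (v s)) 0 (Ici 0) t := by
    intro t ht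
    have h1 : HasDerivWithinAt (fun s => ⟪v' s, v' s⟫)
        (⟪v' t, gradient V (v t)⟫ + ⟪gradient V (v t), v' t⟫) (Ici 0) t :=
      (hv' t ht).inner ℝ (hv' t ht)
    have h2 := (chain V hVd t ht).const_mul (2:ℝ)
    have h3 := h1.sub h2
    have : ⟪v' t, gradient V (v t)⟫ + ⟪gradient V (v t), v' t⟫
        - 2 * ⟪gradient V (v t), v' t⟫ = 0 := by
      rw [real_inner_comm]; ring
    rwa [this] at h3
  set c : ℝ := ⟪v' 0, v' 0⟫ - 2 * V (v 0) with hc_def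
  have hconst : ∀ t ∈ Ici (0:ℝ), ⟪v' t, v' t⟫ - 2 * V (v t) = c := by
    intro t ht
    have := (convex_Ici (0:ℝ)).norm_image_sub_le_of_norm_hasDerivWithin_le
      (C := 0) hE (fun x _ => by simp) self_mem_Ici ht
    simp only [zero_mul, Real.norm_eq_abs] at this
    have := abs_nonpos_iff.mp (le_of_le_of_eq this rfl)
    linarith [sub_eq_zero.mp this]
  have hkey : ∀ t ∈ Ici (0:ℝ), ‖v' t‖ ^ 2 = 2 * V (v t) + c := by
    intro t ht
    have := hconst t ht
    rw [real_inner_self_eq_norm_sq] at this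
    linarith
  -- c = 0
  have hc0 : c = 0 := by
    by_contra hc
    have bound : ∀ t ∈ Ioi (0:ℝ), |c| / 2 ≤ ‖v' t‖ ^ 2 + V (v t) := by
      intro t ht
      have h1 := hkey t (mem_Ici.mpr (le_of_lt (mem_Ioi.mp ht)))
      have h2 := hV0 (v t)
      have h3 := sq_nonneg ‖v' t‖
      rcases abs_cases c with ⟨h, _⟩ | ⟨h, _⟩ <;> nlinarith
    have hint : Integrable (fun _ : ℝ => |c| / 2) (volume.restrict (Ioi 0)) := by
      refine hev.mono' aestronglyMeasurable_const ?_
      filter_upwards [ae_restrict_mem measurableSet_Ioi] with t ht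
      rw [Real.norm_eq_abs, abs_of_nonneg (by positivity)]
      exact bound t ht
    rw [integrable_const_iff] at hint
    rcases hint with h | h
    · exact hc (by simpa [abs_eq_zero] using h)
    · have h := h.measure_univ_lt_top
      rw [Measure.restrict_apply_univ, Real.volume_Ioi] at h
      exact (lt_irrefl _ h).elim
  -- pointwise bound on the derivative of ψ ∘ v
  have hψd : ∀ x, HasGradientAt ψ (gradient ψ x) x :=
    fun x => (hψ.differentiable two_ne_zero x).hasGradientAt
  set g : ℝ → ℝ := fun t => ⟪gradient ψ (v t), v' t⟫ with hg_def
  have hg : ∀ t ∈ Ici (0:ℝ), HasDerivWithinAt (fun s => ψ (v s)) (g t) (Ici 0) t :=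
    chain ψ hψd
  have habs : ∀ t ∈ Ici (0:ℝ), |g t| ≤ ‖v' t‖ ^ 2 := by
    intro t ht
    have h1 : |g t| ≤ ‖gradient ψ (v t)‖ * ‖v' t‖ := abs_real_inner_le_norm _ _
    have h2 : ‖gradient ψ (v t)‖ ^ 2 = ‖v' t‖ ^ 2 := by
      have := hkey t ht
      rw [hc0] at this
      rw [hV] at this
      simp only at this
      linarith
    nlinarith [norm_nonneg (gradient ψ (v t)), norm_nonneg (v' t),
      sq_nonneg (‖gradient ψ (v t)‖ - ‖v' t‖)]
  have hgc : ContinuousOn g (Ici 0) :=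
    ((hgradc.comp_continuousOn hvc).inner hv'c)
  -- FTC
  have hFTC : ∀ t, 0 ≤ t → ∫ s in (0:ℝ)..t, g s = ψ (v t) - ψ (v 0) := by
    intro t ht
    refine intervalIntegral.integral_eq_sub_of_hasDeriv_right_of_le (f := fun s => ψ (v s)) (f' := g) ht ?_ ?_ ?_
    · exact hψ.continuous.comp_continuousOn (hvc.mono Icc_subset_Ici_self)
    · intro x hx
      exact (hg x hx.1.le).mono (fun y hy => (hx.1.trans hy).le)
    · exact (hgc.mono (by rw [uIcc_of_le ht]; exact Icc_subset_Ici_self)).intervalIntegrable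
  have hsqc : ContinuousOn (fun s => ‖v' s‖ ^ 2) (Ici 0) := (hv'c.norm).pow 2
  constructor
  · -- limit exists
    have hgint : IntegrableOn g (Ioi 0) := by
      refine hev.mono' ((hgc.mono Ioi_subset_Ici_self).aestronglyMeasurable measurableSet_Ioi) ?_
      filter_upwards [ae_restrict_mem measurableSet_Ioi] with t ht
      rw [Real.norm_eq_abs]
      exact (habs t (mem_Ici.mpr (mem_Ioi.mp ht).le)).trans (le_add_of_nonneg_right (hV0 _))
    refine ⟨ψ (v 0) + ∫ s in Ioi 0, g s, ?_⟩
    have h1 := intervalIntegral_tendsto_integral_Ioi 0 hgint tendsto_id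
    have h2 : Tendsto (fun t => ψ (v 0) + ∫ s in (0:ℝ)..t, g s) atTop
        (nhds (ψ (v 0) + ∫ s in Ioi 0, g s)) := tendsto_const_nhds.add h1
    refine h2.congr' ?_
    filter_upwards [eventually_ge_atTop (0:ℝ)] with t ht
    rw [hFTC t ht]; ring
  · -- bound
    intro t ht
    rw [abs_sub_comm, ← hFTC t ht]
    calc |∫ s in (0:ℝ)..t, g s| ≤ ∫ s in (0:ℝ)..t, |g s| :=
          intervalIntegral.abs_integral_le_integral_abs ht
    _ ≤ ∫ s in (0:ℝ)..t, ‖v' s‖ ^ 2 := by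
        refine intervalIntegral.integral_mono_on ht ?_ ?_ ?_
        · exact ((hgc.mono (by rw [uIcc_of_le ht]; exact Icc_subset_Ici_self)).abs).intervalIntegrable.mono_set (by rw [uIcc_of_le ht])
        · exact (hsqc.mono (by rw [uIcc_of_le ht]; exact Icc_subset_Ici_self)).intervalIntegrable
        · exact fun s hs => habs s hs.1
end

section
/- Let v be a strongly evanescent solution of the second-order gradient system (DS-2), and suppose the operator norms ‖∇²ψ(v(t))‖ of the second derivative of ψ along the orbit are bounded uniformly in t ≥ 0. Then lim_{t→∞} ‖v′(t)‖ = 0 and lim_{t→∞} V(v(t)) = 0. -/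
open Filter MeasureTheory Set Topology

local notation "⟪" x ", " y "⟫" => inner (𝕜 := ℝ) x y

lemma gradV_aux {H : Type*} [NormedAddCommGroup H] [InnerProductSpace ℝ H] [CompleteSpace H]
    (ψ : H → ℝ) (hψ : ContDiff ℝ 2 ψ) (x : H) :
    ∃ p : H, HasGradientAt (fun y => (1/2 : ℝ) * ‖gradient ψ y‖ ^ 2) p x ∧
      ∀ w : H, ⟪p, w⟫ =
        ⟪gradient ψ x, (InnerProductSpace.toDual ℝ H).symm (fderiv ℝ (fderiv ℝ ψ) x w)⟫ := by
  set T := (InnerProductSpace.toDual ℝ H).symm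
  set A := fderiv ℝ (fderiv ℝ ψ) x with hA
  have hψ' : Differentiable ℝ (fderiv ℝ ψ) :=
    (hψ.fderiv_right (m := 1) (by norm_num)).differentiable one_ne_zero
  have hG : HasFDerivAt (gradient ψ)
      ((T.toContinuousLinearEquiv.toContinuousLinearMap).comp A) x := by
    exact T.toContinuousLinearEquiv.toContinuousLinearMap.hasFDerivAt.comp x
      (hψ'.differentiableAt.hasFDerivAt)
  have hinner : HasFDerivAt (fun y => ⟪gradient ψ y, gradient ψ y⟫)
      ((fderivInnerCLM ℝ (gradient ψ x, gradient ψ x)).comp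
        (((T.toContinuousLinearEquiv.toContinuousLinearMap).comp A).prod
          ((T.toContinuousLinearEquiv.toContinuousLinearMap).comp A))) x :=
    hG.inner ℝ hG
  have hVf : HasFDerivAt (fun y => (1/2 : ℝ) * ‖gradient ψ y‖ ^ 2)
      ((1/2 : ℝ) • ((fderivInnerCLM ℝ (gradient ψ x, gradient ψ x)).comp
        (((T.toContinuousLinearEquiv.toContinuousLinearMap).comp A).prod
          ((T.toContinuousLinearEquiv.toContinuousLinearMap).comp A)))) x := by
    have := hinner.const_smul (1/2 : ℝ)
    convert this using 2 with y
    · rfl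
    · simp [real_inner_self_eq_norm_sq, smul_eq_mul]
  refine ⟨T _, hVf.hasGradientAt, fun w => ?_⟩
  rw [InnerProductSpace.toDual_symm_apply]
  simp only [ContinuousLinearMap.smul_apply, ContinuousLinearMap.coe_comp',
    Function.comp_apply, ContinuousLinearMap.prod_apply, fderivInnerCLM_apply,
    smul_eq_mul]
  simp only [LinearIsometryEquiv.coe_toContinuousLinearEquiv,
    ContinuousLinearEquiv.coe_coe]
  rw [real_inner_comm (T (A w)) (gradient ψ x)]
  ring

/-- Proposition 1 (iii): if `v` is a strongly evanescent solution of the second-order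
gradient system `v'' = ∇V(v)` with `V = ½‖∇ψ‖²` and the operator norms `‖∇²ψ(v t)‖`
are bounded uniformly in `t ≥ 0`, then `‖v'(t)‖ → 0` and `V(v t) → 0` as `t → ∞`. -/
theorem stmt_4 {H : Type*} [NormedAddCommGroup H] [InnerProductSpace ℝ H] [CompleteSpace H]
    (ψ : H → ℝ) (hψ : ContDiff ℝ 2 ψ)
    (V : H → ℝ) (hV : V = fun x => (1/2 : ℝ) * ‖gradient ψ x‖ ^ 2)
    (v v' : ℝ → H)
    (hv : ∀ t ∈ Ici (0:ℝ), HasDerivWithinAt v (v' t) (Ici 0) t)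
    (hv' : ∀ t ∈ Ici (0:ℝ), HasDerivWithinAt v' (gradient V (v t)) (Ici 0) t)
    (hev : IntegrableOn (fun t => ‖v' t‖ ^ 2 + V (v t)) (Ioi 0))
    (hbdd : ∃ M : ℝ, ∀ t ≥ (0:ℝ), ‖fderiv ℝ (fderiv ℝ ψ) (v t)‖ ≤ M) :
    Tendsto (fun t => ‖v' t‖) atTop (nhds 0) ∧
      Tendsto (fun t => V (v t)) atTop (nhds 0) := by
  obtain ⟨M, hM⟩ := hbdd
  have hM0 : (0:ℝ) ≤ M := le_trans (norm_nonneg (fderiv ℝ (fderiv ℝ ψ) (v 0))) (hM 0 le_rfl)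
  set C := 3 * M with hC
  have hC0 : (0:ℝ) ≤ C := by positivity
  set g : ℝ → ℝ := fun t => ‖v' t‖ ^ 2 + V (v t) with hg
  -- basic facts about V
  have hV0 : ∀ x, 0 ≤ V x := by intro x; rw [hV]; positivity
  have hg0 : ∀ t, 0 ≤ g t := fun t => add_nonneg (by positivity) (hV0 _)
  -- gradient of V
  have hgradV : ∀ x : H, HasGradientAt V (gradient V x) x ∧
      ∀ w : H, ⟪gradient V x, w⟫ =
        ⟪gradient ψ x, (InnerProductSpace.toDual ℝ H).symm (fderiv ℝ (fderiv ℝ ψ) x w)⟫ := by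
    intro x
    obtain ⟨p, hp, hpw⟩ := gradV_aux ψ hψ x
    rw [hV] at *
    have : gradient (fun y => (1/2 : ℝ) * ‖gradient ψ y‖ ^ 2) x = p := hp.gradient
    rw [this]
    exact ⟨hp, hpw⟩
  have hinner_bound : ∀ t ≥ (0:ℝ), |⟪gradient V (v t), v' t⟫| ≤ M * ‖gradient ψ (v t)‖ * ‖v' t‖ := by
    intro t ht
    rw [(hgradV (v t)).2 (v' t)]
    calc |⟪gradient ψ (v t), (InnerProductSpace.toDual ℝ H).symm (fderiv ℝ (fderiv ℝ ψ) (v t) (v' t))⟫|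
        ≤ ‖gradient ψ (v t)‖ * ‖(InnerProductSpace.toDual ℝ H).symm (fderiv ℝ (fderiv ℝ ψ) (v t) (v' t))‖ :=
          abs_real_inner_le_norm _ _
      _ = ‖gradient ψ (v t)‖ * ‖fderiv ℝ (fderiv ℝ ψ) (v t) (v' t)‖ := by
          rw [LinearIsometryEquiv.norm_map]
      _ ≤ ‖gradient ψ (v t)‖ * (M * ‖v' t‖) := by
          refine mul_le_mul_of_nonneg_left ?_ (norm_nonneg _)
          calc ‖fderiv ℝ (fderiv ℝ ψ) (v t) (v' t)‖
              ≤ ‖fderiv ℝ (fderiv ℝ ψ) (v t)‖ * ‖v' t‖ := ContinuousLinearMap.le_opNorm _ _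
            _ ≤ M * ‖v' t‖ := mul_le_mul_of_nonneg_right (hM t ht) (norm_nonneg _)
      _ = M * ‖gradient ψ (v t)‖ * ‖v' t‖ := by ring
  -- derivative of g
  have hgd : ∀ t ∈ Ici (0:ℝ), HasDerivWithinAt g (3 * ⟪gradient V (v t), v' t⟫) (Ici 0) t := by
    intro t ht
    have h1 : HasDerivWithinAt (fun s => ‖v' s‖ ^ 2)
        (⟪v' t, gradient V (v t)⟫ + ⟪gradient V (v t), v' t⟫) (Ici 0) t := by
      have := (hv' t ht).inner ℝ (hv' t ht)
      have heq : (fun s => ‖v' s‖ ^ 2) = fun s => ⟪v' s, v' s⟫ := by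
        funext s; rw [real_inner_self_eq_norm_sq]
      rw [heq]
      exact this
    have h2 : HasDerivWithinAt (fun s => V (v s)) (⟪gradient V (v t), v' t⟫) (Ici 0) t := by
      have hf : HasFDerivAt V (InnerProductSpace.toDual ℝ H (gradient V (v t))) (v t) :=
        hasGradientAt_iff_hasFDerivAt.1 (hgradV (v t)).1
      have := hf.comp_hasDerivWithinAt t (hv t ht)
      simp only [InnerProductSpace.toDual_apply_apply] at this
      exact this
    have := h1.add h2
    convert this using 1
    · rfl
    · rfl
    · rfl
    rw [real_inner_comm (v' t) (gradient V (v t))]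
    ring
  -- bound on the derivative
  have hbound : ∀ t ≥ (0:ℝ), |3 * ⟪gradient V (v t), v' t⟫| ≤ C * g t := by
    intro t ht
    have h1 := hinner_bound t ht
    have h2 : M * ‖gradient ψ (v t)‖ * ‖v' t‖ ≤ M * ((1/2) * ‖gradient ψ (v t)‖ ^ 2 + ‖v' t‖ ^ 2) := by
      nlinarith [sq_nonneg (‖gradient ψ (v t)‖ - ‖v' t‖), sq_nonneg ‖v' t‖, norm_nonneg (v' t),
        norm_nonneg (gradient ψ (v t))]
    have h3 : g t = ‖v' t‖ ^ 2 + (1/2) * ‖gradient ψ (v t)‖ ^ 2 := by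
      simp only [hg, hV]
    rw [abs_mul, abs_of_nonneg (by norm_num : (0:ℝ) ≤ 3)]
    rw [hC]
    have h4 : M * ((1/2) * ‖gradient ψ (v t)‖ ^ 2 + ‖v' t‖ ^ 2) = M * g t := by rw [h3]; ring
    have h5 : |⟪gradient V (v t), v' t⟫| ≤ M * g t := le_trans h1 (le_trans h2 (le_of_eq h4))
    calc 3 * |⟪gradient V (v t), v' t⟫| ≤ 3 * (M * g t) := by
          linarith [h5]
      _ = 3 * M * g t := by ring
  -- the Gronwall-type antitone function
  set k : ℝ → ℝ := fun t => g t * Real.exp (-C * t) with hk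
  have hgcont : ContinuousOn g (Ici 0) := fun t ht => (hgd t ht).continuousWithinAt
  have hkderiv : ∀ t ∈ Ioi (0:ℝ), HasDerivAt k
      (3 * ⟪gradient V (v t), v' t⟫ * Real.exp (-C * t) + g t * (Real.exp (-C * t) * -C)) t := by
    intro t ht
    have hgd' : HasDerivAt g (3 * ⟪gradient V (v t), v' t⟫) t :=
      (hgd t (mem_Ici.2 (le_of_lt ht))).hasDerivAt (Ici_mem_nhds ht)
    have he : HasDerivAt (fun s => Real.exp (-C * s)) (Real.exp (-C * t) * -C) t := by
      have h0 : HasDerivAt (fun s : ℝ => -C * s) (-C) t := by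
        simpa using (hasDerivAt_id t).const_mul (-C)
      exact (Real.hasDerivAt_exp (-C * t)).comp t h0
    exact hgd'.mul he
  have hanti : AntitoneOn k (Ici 0) := by
    refine antitoneOn_of_deriv_nonpos (convex_Ici 0) ?_ ?_ ?_
    · exact (hgcont.mul (Real.continuous_exp.comp (continuous_const.mul continuous_id)).continuousOn)
    · intro t ht
      rw [interior_Ici] at ht
      exact (hkderiv t ht).differentiableAt.differentiableWithinAt
    · intro t ht
      rw [interior_Ici] at ht
      rw [(hkderiv t ht).deriv]
      have hb := hbound t (le_of_lt ht)
      have he := Real.exp_pos (-C * t)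
      have h1 : 3 * ⟪gradient V (v t), v' t⟫ ≤ C * g t := le_trans (le_abs_self _) hb
      nlinarith
  -- pointwise lower estimate
  have hlow : ∀ t, 1 ≤ t → ∀ s ∈ Icc (t - 1) t, g t * Real.exp (-C) ≤ g s := by
    intro t ht s hs
    have hs0 : (0:ℝ) ≤ s := le_trans (by linarith) hs.1
    have h1 : k t ≤ k s := hanti hs0 (by linarith : (0:ℝ) ≤ t) hs.2
    have h2 : g t * Real.exp (-C * t) * Real.exp (C * s) ≤ g s := by
      have := mul_le_mul_of_nonneg_right h1 (le_of_lt (Real.exp_pos (C * s)))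
      calc g t * Real.exp (-C * t) * Real.exp (C * s)
          ≤ g s * Real.exp (-C * s) * Real.exp (C * s) := this
        _ = g s * Real.exp (-C * s + C * s) := by rw [mul_assoc, ← Real.exp_add]
        _ = g s := by simp
    refine le_trans ?_ h2
    rw [mul_assoc, ← Real.exp_add]
    refine mul_le_mul_of_nonneg_left (Real.exp_le_exp.2 ?_) (hg0 t)
    nlinarith [hs.1, hs.2]
  -- integral machinery
  have hgInt : IntegrableOn g (Ioi 0) := hev
  have hII : ∀ a : ℝ, 0 ≤ a → IntervalIntegrable g volume 0 a := by
    intro a ha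
    rw [intervalIntegrable_iff, uIoc_of_le ha]
    exact hgInt.mono_set Ioc_subset_Ioi_self
  have hF : Tendsto (fun t => (∫ s in (0:ℝ)..t, g s) - ∫ s in (0:ℝ)..(t - 1), g s)
      atTop (𝓝 0) := by
    have h1 := intervalIntegral_tendsto_integral_Ioi 0 hgInt tendsto_id
    have h2 := intervalIntegral_tendsto_integral_Ioi 0 hgInt
      (tendsto_atTop_add_const_right atTop (-1) tendsto_id)
    have := h1.sub h2
    simpa [sub_eq_add_neg] using this
  -- main claim : g tends to 0
  have hmain : ∀ ε > (0:ℝ), ∀ᶠ t in atTop, g t < ε := by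
    intro ε hε
    have hδ : (0:ℝ) < ε * Real.exp (-C) := by positivity
    filter_upwards [hF.eventually_lt_const hδ, eventually_ge_atTop (1:ℝ)] with t hdiff ht1
    by_contra hcon
    push_neg at hcon
    have h01 : (0:ℝ) ≤ t - 1 := by linarith
    have heq : (∫ s in (0:ℝ)..t, g s) - ∫ s in (0:ℝ)..(t - 1), g s
        = ∫ s in Ioc (t - 1) t, g s := by
      rw [intervalIntegral.integral_interval_sub_left (hII t (by linarith)) (hII (t - 1) h01),
        intervalIntegral.integral_of_le (by linarith : t - 1 ≤ t)]
    have hsub : Ioc (t - 1) t ⊆ Ioi 0 := fun s hs => lt_of_le_of_lt h01 hs.1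
    have hint : IntegrableOn g (Ioc (t - 1) t) := hgInt.mono_set hsub
    have hlb : ε * Real.exp (-C) * (volume (Ioc (t - 1) t)).toReal ≤ ∫ s in Ioc (t - 1) t, g s := by
      rw [mul_comm, ← smul_eq_mul, ← measureReal_def]
      refine setIntegral_ge_of_const_le measurableSet_Ioc measure_Ioc_lt_top.ne ?_ hint
      intro s hs
      calc ε * Real.exp (-C) ≤ g t * Real.exp (-C) :=
            mul_le_mul_of_nonneg_right hcon (le_of_lt (Real.exp_pos _))
        _ ≤ g s := hlow t ht1 s ⟨le_of_lt hs.1, hs.2⟩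
    have hvol : (volume (Ioc (t - 1) t)).toReal = 1 := by
      rw [Real.volume_Ioc]
      norm_num
    rw [hvol, mul_one] at hlb
    rw [heq] at hdiff
    linarith
  have hgt : Tendsto g atTop (𝓝 0) := by
    refine tendsto_order.2 ⟨fun a ha => ?_, fun a ha => hmain a ha⟩
    exact Eventually.of_forall fun t => lt_of_lt_of_le ha (hg0 t)
  constructor
  · have h2 : Tendsto (fun t => ‖v' t‖ ^ 2) atTop (𝓝 0) :=
      squeeze_zero (fun t => by positivity) (fun t => le_add_of_nonneg_right (hV0 _)) hgt
    have h3 := h2.sqrt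
    simp only [Real.sqrt_zero] at h3
    convert h3 using 2 with t
    rw [Real.sqrt_sq (norm_nonneg _)]
  · exact squeeze_zero (fun t => hV0 _) (fun t => le_add_of_nonneg_left (by positivity)) hgt
end

section
/- Assume ψ is convex and let u be a global solution of the first-order gradient system (DS-1). Then t ↦ ψ(u(t)) is convex and nonincreasing on [0, ∞), and inf_{t ≥ 0} ψ(u(t)) = lim_{t→∞} ψ(u(t)) = inf_{z ∈ H} ψ(z). -/
open Filter MeasureTheory Set

section helpers
variable {H : Type*} [NormedAddCommGroup H] [InnerProductSpace ℝ H] [CompleteSpace H]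

local notation "⟪" x ", " y "⟫" => @inner ℝ _ _ x y

lemma inner_gradient_eq (ψ : H → ℝ) (x v : H) :
    ⟪gradient ψ x, v⟫ = fderiv ℝ ψ x v := by
  rw [gradient, ← InnerProductSpace.toDual_apply_apply, LinearIsometryEquiv.apply_symm_apply]

-- convex gradient inequality
lemma grad_ineq (ψ : H → ℝ) (hψ : ContDiff ℝ 1 ψ) (hconv : ConvexOn ℝ univ ψ) (x z : H) :
    ⟪gradient ψ x, z - x⟫ ≤ ψ z - ψ x := by
  have hd : ∀ y : H, HasFDerivAt ψ (fderiv ℝ ψ y) y :=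
    fun y => (hψ.differentiable one_ne_zero y).hasFDerivAt
  set k : ℝ → ℝ := fun s => ψ (x + s • (z - x)) with hk
  have hkline : ∀ s : ℝ, HasDerivAt (fun s : ℝ => x + s • (z - x)) (z - x) s := by
    intro s
    simpa using ((hasDerivAt_id s).smul_const (z - x)).const_add x
  have hkd : ∀ s : ℝ, HasDerivAt k (fderiv ℝ ψ (x + s • (z - x)) (z - x)) s := by
    intro s
    exact (hd _).comp_hasDerivAt s (hkline s)
  have hkc : ConvexOn ℝ univ k := by
    have h1 := hconv.comp_affineMap (AffineMap.lineMap x z : ℝ →ᵃ[ℝ] H)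
    have h2 : k = ψ ∘ (AffineMap.lineMap x z : ℝ →ᵃ[ℝ] H) := by
      funext c
      simp only [hk, Function.comp_apply, AffineMap.lineMap_apply_module]
      congr 1
      rw [smul_sub, sub_smul, one_smul]
      abel
    rw [h2]
    simpa using h1
  have hslope := hkc.le_slope_of_hasDerivAt (mem_univ (0:ℝ)) (mem_univ (1:ℝ)) one_pos (hkd 0)
  rw [inner_gradient_eq]
  have h0 : k 0 = ψ x := by simp [hk]
  have h1 : k 1 = ψ z := by simp [hk]
  have : fderiv ℝ ψ x (z - x) ≤ k 1 - k 0 := by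
    simpa [slope_def_field, h0, h1, hk] using hslope
  simpa [h0, h1] using this

end helpers

section hess
variable {H : Type*} [NormedAddCommGroup H] [InnerProductSpace ℝ H] [CompleteSpace H]
local notation "⟪" x ", " y "⟫" => @inner ℝ _ _ x y

lemma hess_nonneg (ψ : H → ℝ) (hψ : ContDiff ℝ 2 ψ) (hconv : ConvexOn ℝ univ ψ) (x v : H) :
    0 ≤ fderiv ℝ (fderiv ℝ ψ) x v v := by
  have hψ1 : ContDiff ℝ 1 ψ := hψ.of_le (by norm_num)
  have hD : ContDiff ℝ 1 (fderiv ℝ ψ) := hψ.fderiv_right (by norm_num)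
  have hline : ∀ s : ℝ, HasDerivAt (fun s : ℝ => x + s • v) v s := fun s => by
    simpa using ((hasDerivAt_id s).smul_const v).const_add x
  set r : ℝ → ℝ := fun s => fderiv ℝ ψ (x + s • v) v with hr
  -- r is monotone
  have hkc : ConvexOn ℝ univ (fun s : ℝ => ψ (x + s • v)) := by
    have h1 := hconv.comp_affineMap
      ((AffineMap.lineMap x (x + v)) : ℝ →ᵃ[ℝ] H)
    have h2 : (fun s : ℝ => ψ (x + s • v)) = ψ ∘ (AffineMap.lineMap x (x + v) : ℝ →ᵃ[ℝ] H) := by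
      funext c
      simp only [Function.comp_apply, AffineMap.lineMap_apply]
      congr 1
      rw [vsub_eq_sub, vadd_eq_add, add_sub_cancel_left, add_comm]
    rw [h2]; simpa using h1
  have hkd : ∀ s : ℝ, HasDerivAt (fun s : ℝ => ψ (x + s • v)) (r s) s := fun s =>
    ((hψ1.differentiable one_ne_zero _).hasFDerivAt).comp_hasDerivAt s (hline s)
  have hrmono : Monotone r := by
    have hm := monotoneOn_univ.1 (hkc.monotoneOn_deriv (fun y _ =>
      (hkd y).differentiableAt))
    have he : deriv (fun s : ℝ => ψ (x + s • v)) = r := funext fun s => (hkd s).deriv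
    rwa [he] at hm
  -- r has derivative fderiv ℝ (fderiv ℝ ψ) x v v at 0
  have hra : HasDerivAt r (fderiv ℝ (fderiv ℝ ψ) x v v) 0 := by
    have hF : HasFDerivAt (fun y => fderiv ℝ ψ y v)
        ((ContinuousLinearMap.apply ℝ ℝ v).comp (fderiv ℝ (fderiv ℝ ψ) x)) x :=
      (ContinuousLinearMap.apply ℝ ℝ v).hasFDerivAt.comp x
        ((hD.differentiable one_ne_zero x).hasFDerivAt)
    have hF0 : HasFDerivAt (fun y => fderiv ℝ ψ y v)
        ((ContinuousLinearMap.apply ℝ ℝ v).comp (fderiv ℝ (fderiv ℝ ψ) x)) ((fun s : ℝ => x + s • v) 0) := by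
      simpa using hF
    have := hF0.comp_hasDerivAt 0 (hline 0)
    exact this
  -- monotone + derivative ⇒ nonneg
  have hslope : Tendsto (slope r 0) (nhdsWithin 0 {(0:ℝ)}ᶜ) (nhds (fderiv ℝ (fderiv ℝ ψ) x v v)) :=
    hasDerivAt_iff_tendsto_slope.1 hra
  refine ge_of_tendsto hslope ?_
  filter_upwards [self_mem_nhdsWithin] with s hs
  rcases lt_or_gt_of_ne (Ne.symm hs) with h | h
  · rw [slope_def_field]
    have : r 0 ≤ r s := hrmono h.le
    rw [div_nonneg_iff]
    exact Or.inl ⟨by linarith, by linarith⟩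
  · rw [slope_def_field]
    have : r s ≤ r 0 := hrmono h.le
    rw [div_nonneg_iff]
    exact Or.inr ⟨by linarith, by linarith⟩

end hess
section main
variable {H : Type*} [NormedAddCommGroup H] [InnerProductSpace ℝ H] [CompleteSpace H]
local notation "⟪" x ", " y "⟫" => @inner ℝ _ _ x y

theorem stmt_7' (ψ : H → ℝ) (hψ : ContDiff ℝ 2 ψ) (hconv : ConvexOn ℝ univ ψ)
    (u u' : ℝ → H)
    (hu : ∀ t ∈ Ici (0:ℝ), HasDerivWithinAt u (u' t) (Ici 0) t)
    (hode : ∀ t ∈ Ici (0:ℝ), u' t = -(gradient ψ (u t))) :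
    ConvexOn ℝ (Ici 0) (fun t => ψ (u t)) ∧
      AntitoneOn (fun t => ψ (u t)) (Ici 0) ∧
      (⨅ t ∈ Ici (0:ℝ), (ψ (u t) : EReal)) = ⨅ z : H, (ψ z : EReal) ∧
      Filter.Tendsto (fun t => (ψ (u t) : EReal)) Filter.atTop (nhds (⨅ z : H, (ψ z : EReal))) := by
  have hψ1 : ContDiff ℝ 1 ψ := hψ.of_le (by norm_num)
  have hD : ContDiff ℝ 1 (fderiv ℝ ψ) := hψ.fderiv_right (by norm_num)
  set φ : ℝ → ℝ := fun t => ψ (u t) with hφdef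
  set g : ℝ → H := fun t => gradient ψ (u t) with hgdef
  set q : ℝ → ℝ := fun t => ⟪g t, g t⟫ with hqdef
  set w : ℝ → H := fun t => (InnerProductSpace.toDual ℝ H).symm
      (fderiv ℝ (fderiv ℝ ψ) (u t) (u' t)) with hwdef
  -- derivative of φ
  have hφ' : ∀ t ∈ Ici (0:ℝ), HasDerivWithinAt φ (-(q t)) (Ici 0) t := by
    intro t ht
    have h1 : HasDerivWithinAt φ (fderiv ℝ ψ (u t) (u' t)) (Ici 0) t :=
      ((hψ1.differentiable one_ne_zero _).hasFDerivAt).comp_hasDerivWithinAt t (hu t ht)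
    have h2 : fderiv ℝ ψ (u t) (u' t) = -(q t) := by
      rw [← inner_gradient_eq, hode t ht, hqdef, hgdef]
      simp [inner_neg_right]
    rwa [h2] at h1
  -- derivative of g
  have hg' : ∀ t ∈ Ici (0:ℝ), HasDerivWithinAt g (w t) (Ici 0) t := by
    intro t ht
    have h1 : HasDerivWithinAt (fun t => fderiv ℝ ψ (u t))
        (fderiv ℝ (fderiv ℝ ψ) (u t) (u' t)) (Ici 0) t :=
      ((hD.differentiable one_ne_zero _).hasFDerivAt).comp_hasDerivWithinAt t (hu t ht)
    have h2 := ((InnerProductSpace.toDual ℝ H).symm.toContinuousLinearEquiv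
        : (H →L[ℝ] ℝ) ≃L[ℝ] H).hasFDerivAt.comp_hasDerivWithinAt t h1
    exact h2
  -- derivative of q
  have hq' : ∀ t ∈ Ici (0:ℝ), HasDerivWithinAt q (2 * ⟪w t, g t⟫) (Ici 0) t := by
    intro t ht
    have := (hg' t ht).inner ℝ (hg' t ht)
    have e : ⟪g t, w t⟫ + ⟪w t, g t⟫ = 2 * ⟪w t, g t⟫ := by
      rw [real_inner_comm]; ring
    rwa [e] at this
  -- the inner product ⟪w t, g t⟫ is nonpositive
  have hwg : ∀ t ∈ Ici (0:ℝ), ⟪w t, g t⟫ ≤ 0 := by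
    intro t ht
    have e : ⟪w t, g t⟫ = fderiv ℝ (fderiv ℝ ψ) (u t) (u' t) (g t) := by
      rw [hwdef, ← InnerProductSpace.toDual_apply_apply, LinearIsometryEquiv.apply_symm_apply]
    rw [e, hode t ht]
    have := hess_nonneg ψ hψ hconv (u t) (g t)
    simp only [map_neg, ContinuousLinearMap.neg_apply]
    rw [hgdef]
    linarith
  have hqnonneg : ∀ t, 0 ≤ q t := fun t => real_inner_self_nonneg
  -- continuity of φ and q on Ici 0
  have hφcont : ContinuousOn φ (Ici 0) := fun t ht => (hφ' t ht).continuousWithinAt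
  have hqcont : ContinuousOn q (Ici 0) := fun t ht => (hq' t ht).continuousWithinAt
  -- q is antitone on Ici 0
  have hqanti : AntitoneOn q (Ici 0) := by
    refine antitoneOn_of_hasDerivWithinAt_nonpos (convex_Ici 0) hqcont
      (f' := fun t => 2 * ⟪w t, g t⟫) ?_ ?_
    · intro t ht
      rw [interior_Ici] at ht ⊢
      exact (hq' t (mem_Ici.2 (le_of_lt ht))).mono Ioi_subset_Ici_self
    · intro t ht
      rw [interior_Ici] at ht
      have := hwg t (mem_Ici.2 (le_of_lt ht))
      show 2 * ⟪w t, g t⟫ ≤ 0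
      linarith
  -- φ is antitone on Ici 0
  have hφanti : AntitoneOn φ (Ici 0) := by
    refine antitoneOn_of_hasDerivWithinAt_nonpos (convex_Ici 0) hφcont
      (f' := fun t => -(q t)) ?_ ?_
    · intro t ht
      rw [interior_Ici] at ht ⊢
      exact (hφ' t (mem_Ici.2 (le_of_lt ht))).mono Ioi_subset_Ici_self
    · intro t ht
      have := hqnonneg t
      show -(q t) ≤ 0
      linarith
  -- full derivative at interior points
  have hφd : ∀ t ∈ Ioi (0:ℝ), HasDerivAt φ (-(q t)) t := fun t ht =>
    (hφ' t (mem_Ici.2 (le_of_lt ht))).hasDerivAt (Ici_mem_nhds ht)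
  -- φ is convex on Ici 0
  have hφconv : ConvexOn ℝ (Ici 0) φ := by
    refine MonotoneOn.convexOn_of_deriv (convex_Ici 0) hφcont ?_ ?_
    · rw [interior_Ici]
      exact fun t ht => (hφd t ht).differentiableAt.differentiableWithinAt
    · rw [interior_Ici]
      intro s hs t ht hst
      rw [(hφd s hs).deriv, (hφd t ht).deriv]
      exact neg_le_neg (hqanti (mem_Ici.2 (le_of_lt hs)) (mem_Ici.2 (le_of_lt ht)) hst)
  refine ⟨hφconv, hφanti, ?_⟩
  -- key quantitative bound
  have hkey : ∀ (z : H) (T : ℝ), 0 < T →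
      φ T ≤ ψ z + ⟪u 0 - z, u 0 - z⟫ / (2 * T) := by
    intro z T hT
    set G : ℝ → ℝ := fun t => ⟪u t - z, u t - z⟫ + t * (2 * (φ T - ψ z)) with hGdef
    have hG' : ∀ t ∈ Ici (0:ℝ), HasDerivWithinAt G
        (2 * ⟪u' t, u t - z⟫ + 2 * (φ T - ψ z)) (Ici 0) t := by
      intro t ht
      have h1 : HasDerivWithinAt (fun t => u t - z) (u' t) (Ici 0) t := (hu t ht).sub_const z
      have h2 := h1.inner ℝ h1
      have h3 : HasDerivWithinAt (fun t : ℝ => t * (2 * (φ T - ψ z)))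
          (2 * (φ T - ψ z)) (Ici 0) t := by
        simpa using (hasDerivWithinAt_id t (Ici 0)).mul_const (2 * (φ T - ψ z))
      have h4 := h2.add h3
      have e : ⟪u t - z, u' t⟫ + ⟪u' t, u t - z⟫ = 2 * ⟪u' t, u t - z⟫ := by
        rw [real_inner_comm]; ring
      rw [hGdef]
      simpa [e, add_assoc, Pi.add_def] using h4
    have hGanti : AntitoneOn G (Icc 0 T) := by
      refine antitoneOn_of_hasDerivWithinAt_nonpos (convex_Icc 0 T)
        (fun t ht => ((hG' t ht.1).continuousWithinAt).mono Icc_subset_Ici_self)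
        (f' := fun t => 2 * ⟪u' t, u t - z⟫ + 2 * (φ T - ψ z)) ?_ ?_
      · intro t ht
        rw [interior_Icc] at ht ⊢
        exact (hG' t (mem_Ici.2 (le_of_lt ht.1))).mono (Ioo_subset_Icc_self.trans Icc_subset_Ici_self)
      · intro t ht
        rw [interior_Icc] at ht
        have htI : t ∈ Ici (0:ℝ) := mem_Ici.2 (le_of_lt ht.1)
        have h5 : ⟪u' t, u t - z⟫ ≤ ψ z - φ t := by
          rw [hode t htI]
          have := grad_ineq ψ hψ1 hconv (u t) z
          have e2 : ⟪-(gradient ψ (u t)), u t - z⟫ = ⟪gradient ψ (u t), z - u t⟫ := by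
            rw [inner_neg_left, ← inner_neg_right]
            congr 1
            abel
          rw [e2]
          exact this
        have h6 : φ T ≤ φ t := hφanti htI (mem_Ici.2 (le_of_lt (ht.1.trans ht.2))) (le_of_lt ht.2)
        show 2 * ⟪u' t, u t - z⟫ + 2 * (φ T - ψ z) ≤ 0
        linarith
    have hG := hGanti (left_mem_Icc.2 hT.le) (right_mem_Icc.2 hT.le) hT.le
    have h7 : 0 ≤ ⟪u T - z, u T - z⟫ := real_inner_self_nonneg
    have h8 : T * (2 * (φ T - ψ z)) ≤ ⟪u 0 - z, u 0 - z⟫ := by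
      simp only [hGdef, zero_mul, add_zero] at hG
      linarith
    rw [← sub_le_iff_le_add', le_div_iff₀ (by positivity : (0:ℝ) < 2 * T)]
    nlinarith [h8]
  -- EReal infimum part
  set M : EReal := ⨅ t ∈ Ici (0:ℝ), ((φ t : ℝ) : EReal) with hMdef
  set L : EReal := ⨅ z : H, ((ψ z : ℝ) : EReal) with hLdef
  have hLM : L ≤ M := le_iInf₂ fun t ht => iInf_le _ (u t)
  have hMz : ∀ z : H, M ≤ ((ψ z : ℝ) : EReal) := by
    intro z
    by_contra hcon
    push_neg at hcon
    obtain ⟨x, hx1, hx2⟩ := EReal.lt_iff_exists_real_btwn.1 hcon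
    have hε : (0:ℝ) < x - ψ z := by
      have := EReal.coe_lt_coe_iff.1 hx1; linarith
    set c : ℝ := ⟪u 0 - z, u 0 - z⟫ with hcdef
    have hc : 0 ≤ c := real_inner_self_nonneg
    set T : ℝ := max 1 (c / (2 * (x - ψ z))) with hT
    have hT0 : 0 < T := lt_of_lt_of_le one_pos (le_max_left _ _)
    have hbound := hkey z T hT0
    have h9 : c / (2 * T) ≤ x - ψ z := by
      rw [div_le_iff₀ (by positivity)]
      have h10 : c / (2 * (x - ψ z)) ≤ T := le_max_right _ _
      rw [div_le_iff₀ (by positivity)] at h10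
      nlinarith
    have h11 : φ T ≤ x := by linarith
    have h12 : M ≤ ((φ T : ℝ) : EReal) := iInf₂_le T hT0.le
    have h13 : ((φ T : ℝ) : EReal) ≤ ((x : ℝ) : EReal) := EReal.coe_le_coe_iff.2 h11
    exact absurd (h12.trans h13) (not_le.2 hx2)
  have hME : M = L := le_antisymm (le_iInf hMz) hLM
  -- tendsto
  set F : ℝ → EReal := fun t => ((φ (max t 0) : ℝ) : EReal) with hF
  have hFanti : Antitone F := fun s t hst =>
    EReal.coe_le_coe_iff.2 (hφanti (le_max_right s 0) (le_max_right t 0) (max_le_max hst le_rfl))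
  have htend : Filter.Tendsto F Filter.atTop (nhds (⨅ t, F t)) := tendsto_atTop_iInf hFanti
  have hFM : (⨅ t, F t) = M := by
    apply le_antisymm
    · exact le_iInf₂ fun t ht => (iInf_le F t).trans_eq (by rw [hF]; simp [max_eq_left (mem_Ici.1 ht)])
    · exact le_iInf fun t => iInf₂_le (max t 0) (le_max_right _ _)
  constructor
  · exact hME
  · rw [← hME, ← hFM]
    apply htend.congr'
    filter_upwards [Filter.eventually_ge_atTop (0:ℝ)] with t ht
    rw [hF]; simp [max_eq_left ht, hφdef]

end main

/-- Proposition 3 (i): if `ψ` is convex and `u` is a global solution of `u' = -∇ψ(u)`,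
then `t ↦ ψ(u t)` is convex and nonincreasing on `[0, ∞)`, and
`inf_{t ≥ 0} ψ(u t) = lim_{t→∞} ψ(u t) = inf_{z ∈ H} ψ(z)` (equalities in `EReal`,
so that the common value may be `-∞`). -/
theorem stmt_7 {H : Type*} [NormedAddCommGroup H] [InnerProductSpace ℝ H] [CompleteSpace H]
    (ψ : H → ℝ) (hψ : ContDiff ℝ 2 ψ) (hconv : ConvexOn ℝ univ ψ)
    (u u' : ℝ → H)
    (hu : ∀ t ∈ Ici (0:ℝ), HasDerivWithinAt u (u' t) (Ici 0) t)
    (hode : ∀ t ∈ Ici (0:ℝ), u' t = -(gradient ψ (u t))) :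
    ConvexOn ℝ (Ici 0) (fun t => ψ (u t)) ∧
      AntitoneOn (fun t => ψ (u t)) (Ici 0) ∧
      (⨅ t ∈ Ici (0:ℝ), (ψ (u t) : EReal)) = ⨅ z : H, (ψ z : EReal) ∧
      Tendsto (fun t => (ψ (u t) : EReal)) atTop (nhds (⨅ z : H, (ψ z : EReal))) :=
  stmt_7' ψ hψ hconv u u' hu hode
end

section
/- Assume ψ is convex and let u be a global solution of the first-order gradient system (DS-1). Then for every y ∈ H and every t > 0 one has ‖u′(t)‖ ≤ ‖∇ψ(y)‖ + (1/t)‖u(0) − y‖. -/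
open Filter MeasureTheory Set
open scoped RealInnerProductSpace

section Aux
variable {H : Type*} [NormedAddCommGroup H] [InnerProductSpace ℝ H] [CompleteSpace H]

lemma aux_subgrad (ψ : H → ℝ) (hψ : ContDiff ℝ 2 ψ) (hconv : ConvexOn ℝ univ ψ)
    (x z : H) : ⟪gradient ψ x, z - x⟫ ≤ ψ z - ψ x := by
  have hd : Differentiable ℝ ψ := hψ.differentiable two_ne_zero
  set φ : ℝ → ℝ := fun θ => ψ (θ • (z - x) + x) with hφdef
  have hφconv : ConvexOn ℝ univ φ := by
    have h := hconv.comp_affineMap (AffineMap.lineMap x z)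
    have : (⇑(AffineMap.lineMap x z) ⁻¹' univ : Set ℝ) = univ := by simp
    rw [this] at h
    simpa [hφdef, Function.comp_def, AffineMap.coe_lineMap] using h
  have hline : HasDerivAt (fun θ : ℝ => θ • (z - x) + x) (z - x) 0 := by
    simpa using ((hasDerivAt_id (0 : ℝ)).smul_const (z - x)).add_const x
  have hgrad : HasFDerivAt ψ (InnerProductSpace.toDualMap ℝ H (gradient ψ x)) x := by
    have := (hd x).hasGradientAt
    rwa [hasGradientAt_iff_hasFDerivAt] at this
  have hφderiv : HasDerivAt φ (⟪gradient ψ x, z - x⟫) 0 := by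
    have h0 : (fun θ : ℝ => θ • (z - x) + x) 0 = x := by simp
    have := (h0 ▸ hgrad).comp_hasDerivAt (0 : ℝ) hline
    simpa [InnerProductSpace.toDualMap_apply_apply, Function.comp_def, hφdef] using this
  have hs := hφconv.le_slope_of_hasDerivAt (mem_univ (0 : ℝ)) (mem_univ 1) one_pos hφderiv
  have : slope φ 0 1 = ψ z - ψ x := by
    simp [slope_def_field, hφdef]
  linarith [this ▸ hs]

lemma aux_mono (ψ : H → ℝ) (hψ : ContDiff ℝ 2 ψ) (hconv : ConvexOn ℝ univ ψ)
    (x z : H) : 0 ≤ ⟪gradient ψ x - gradient ψ z, x - z⟫ := by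
  have h1 := aux_subgrad ψ hψ hconv x z
  have h2 := aux_subgrad ψ hψ hconv z x
  have e1 : ⟪gradient ψ x, z - x⟫ = -⟪gradient ψ x, x - z⟫ := by
    rw [← inner_neg_right]; congr 1; abel
  rw [inner_sub_left]
  rw [e1] at h1
  linarith

lemma aux_gradDiff (ψ : H → ℝ) (hψ : ContDiff ℝ 2 ψ) : ContDiff ℝ 1 (gradient ψ) := by
  have hf' : ContDiff ℝ 1 (fderiv ℝ ψ) := hψ.fderiv_right (by norm_num)
  exact (InnerProductSpace.toDual ℝ H).symm.contDiff.comp hf'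

lemma aux_psd (ψ : H → ℝ) (hψ : ContDiff ℝ 2 ψ) (hconv : ConvexOn ℝ univ ψ)
    (x v : H) : 0 ≤ ⟪(fderiv ℝ (gradient ψ) x) v, v⟫ := by
  have hGd : Differentiable ℝ (gradient ψ) := (aux_gradDiff ψ hψ).differentiable one_ne_zero
  set g : ℝ → ℝ := fun θ => ⟪gradient ψ (x + θ • v), v⟫ with hgdef
  have hmono : Monotone g := by
    intro a b hab
    rcases eq_or_lt_of_le hab with rfl | h
    · exact le_rfl
    · have hm := aux_mono ψ hψ hconv (x + b • v) (x + a • v)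
      have he : (x + b • v) - (x + a • v) = (b - a) • v := by
        rw [sub_smul]; abel
      rw [he, inner_sub_left, real_inner_smul_right, real_inner_smul_right] at hm
      nlinarith [hm, sub_pos.mpr h]
  have hline : HasDerivAt (fun θ : ℝ => x + θ • v) v 0 := by
    simpa using (((hasDerivAt_id (0 : ℝ)).smul_const v).const_add x)
  have hcomp : HasDerivAt (fun θ : ℝ => gradient ψ (x + θ • v))
      ((fderiv ℝ (gradient ψ) x) v) 0 := by
    have h1 : HasFDerivAt (gradient ψ) (fderiv ℝ (gradient ψ) x) ((fun θ : ℝ => x + θ • v) 0) := by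
      simpa using (hGd x).hasFDerivAt
    simpa [Function.comp_def] using h1.comp_hasDerivAt (0 : ℝ) hline
  have hg : HasDerivAt g (⟪(fderiv ℝ (gradient ψ) x) v, v⟫) 0 := by
    have := HasDerivAt.inner ℝ hcomp (hasDerivAt_const (0 : ℝ) v)
    simpa [hgdef] using this
  rw [hasDerivAt_iff_tendsto_slope] at hg
  refine ge_of_tendsto hg ?_
  filter_upwards [self_mem_nhdsWithin] with θ hθ
  have hθ' : θ ≠ 0 := hθ
  rw [slope_def_field]
  rcases lt_or_gt_of_ne hθ' with h | h
  · have : g θ ≤ g 0 := hmono h.le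
    apply div_nonneg_of_nonpos <;> linarith
  · have : g 0 ≤ g θ := hmono h.le
    apply div_nonneg <;> linarith

end Aux

/-- Proposition 3 (ii): if `ψ` is convex and `u` is a global solution of `u' = -∇ψ(u)`,
then for every `y ∈ H` and every `t > 0`,
`‖u'(t)‖ ≤ ‖∇ψ(y)‖ + (1/t)‖u(0) - y‖`. -/
theorem stmt_8 {H : Type*} [NormedAddCommGroup H] [InnerProductSpace ℝ H] [CompleteSpace H]
    (ψ : H → ℝ) (hψ : ContDiff ℝ 2 ψ) (hconv : ConvexOn ℝ univ ψ)
    (u u' : ℝ → H)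
    (hu : ∀ t ∈ Ici (0:ℝ), HasDerivWithinAt u (u' t) (Ici 0) t)
    (hode : ∀ t ∈ Ici (0:ℝ), u' t = -(gradient ψ (u t))) :
    ∀ y : H, ∀ t > (0:ℝ), ‖u' t‖ ≤ ‖gradient ψ y‖ + (1/t) * ‖u 0 - y‖ := by
  intro y t ht
  have hd : Differentiable ℝ ψ := hψ.differentiable two_ne_zero
  have hGc : Continuous (gradient ψ) := (aux_gradDiff ψ hψ).continuous
  have hGd : Differentiable ℝ (gradient ψ) := (aux_gradDiff ψ hψ).differentiable one_ne_zero
  have hucont : ContinuousOn u (Ici 0) := fun s hs => (hu s hs).continuousWithinAt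
  have hu'cont : ContinuousOn u' (Ici 0) := by
    have h1 : ContinuousOn (fun s => -(gradient ψ (u s))) (Ici 0) :=
      (hGc.comp_continuousOn hucont).neg
    exact h1.congr hode
  have hud : ∀ s ∈ Ioi (0:ℝ), HasDerivAt u (u' s) s := fun s hs =>
    (hu s (le_of_lt hs : (0:ℝ) ≤ s)).hasDerivAt (Ici_mem_nhds hs)
  -- ψ ∘ u derivative
  have hψu : ∀ s ∈ Ioi (0:ℝ),
      HasDerivAt (fun τ => ψ (u τ)) (⟪gradient ψ (u s), u' s⟫) s := by
    intro s hs
    have hgrad : HasFDerivAt ψ (InnerProductSpace.toDualMap ℝ H (gradient ψ (u s))) (u s) := by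
      have := (hd (u s)).hasGradientAt
      rwa [hasGradientAt_iff_hasFDerivAt] at this
    have := hgrad.comp_hasDerivAt s (hud s hs)
    simpa [InnerProductSpace.toDualMap_apply_apply, Function.comp_def] using this
  -- ‖u'‖² is antitone on Ici 0
  have NA : AntitoneOn (fun s => ⟪u' s, u' s⟫) (Ici 0) := by
    apply antitoneOn_of_hasDerivWithinAt_nonpos (convex_Ici 0)
      (f' := fun s => (-2) * ⟪(fderiv ℝ (gradient ψ) (u s)) (u' s), u' s⟫)
      (hu'cont.inner hu'cont)
    · intro s hs
      rw [interior_Ici] at hs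
      have hw : HasDerivAt (fun τ => -(gradient ψ (u τ)))
          (-((fderiv ℝ (gradient ψ) (u s)) (u' s))) s := by
        exact (((hGd (u s)).hasFDerivAt).comp_hasDerivAt s (hud s hs)).neg
      have hN : HasDerivAt (fun τ => ⟪-(gradient ψ (u τ)), -(gradient ψ (u τ))⟫)
          (⟪-(gradient ψ (u s)), -((fderiv ℝ (gradient ψ) (u s)) (u' s))⟫ +
           ⟪-((fderiv ℝ (gradient ψ) (u s)) (u' s)), -(gradient ψ (u s))⟫) s :=
        HasDerivAt.inner ℝ hw hw
      have hGu : -(gradient ψ (u s)) = u' s := (hode s (le_of_lt hs : (0:ℝ) ≤ s)).symm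
      rw [hGu] at hN
      have hval : ⟪u' s, -((fderiv ℝ (gradient ψ) (u s)) (u' s))⟫ +
           ⟪-((fderiv ℝ (gradient ψ) (u s)) (u' s)), u' s⟫ =
           (-2) * ⟪(fderiv ℝ (gradient ψ) (u s)) (u' s), u' s⟫ := by
        rw [inner_neg_right, inner_neg_left, real_inner_comm]; ring
      rw [hval] at hN
      have : HasDerivWithinAt (fun s => ⟪u' s, u' s⟫)
          ((-2) * ⟪(fderiv ℝ (gradient ψ) (u s)) (u' s), u' s⟫) (interior (Ici (0:ℝ))) s := by
        refine hN.hasDerivWithinAt.congr ?_ ?_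
        · intro τ hτ
          rw [interior_Ici] at hτ
          rw [hode τ (le_of_lt hτ : (0:ℝ) ≤ τ)]
        · rw [hode s (le_of_lt hs : (0:ℝ) ≤ s)]
      exact this
    · intro s hs
      rw [interior_Ici] at hs
      have := aux_psd ψ hψ hconv (u s) (u' s)
      linarith
  -- the Lyapunov function Φ
  set c : ℝ := ⟪u' t, u' t⟫ with hc
  set Φ : ℝ → ℝ := fun s => ⟪u s - y, u s - y⟫ / 2 + s * (ψ (u s) - ψ y) + s^2/2 * c with hΦ
  have hΦanti : AntitoneOn Φ (Icc 0 t) := by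
    apply antitoneOn_of_hasDerivWithinAt_nonpos (convex_Icc 0 t)
      (f' := fun s => ⟪u' s, u s - y⟫ + (1 * (ψ (u s) - ψ y) + s * ⟪gradient ψ (u s), u' s⟫)
        + (2 * s ^ 1 / 2 * c))
    · -- continuity
      have h0 : ContinuousOn u (Icc 0 t) := hucont.mono Icc_subset_Ici_self
      have h1 : ContinuousOn (fun s => u s - y) (Icc 0 t) := h0.sub continuousOn_const
      have h2 : ContinuousOn (fun s => ⟪u s - y, u s - y⟫ / 2) (Icc 0 t) :=
        (h1.inner h1).div_const 2
      have h3 : ContinuousOn (fun s : ℝ => s * (ψ (u s) - ψ y)) (Icc 0 t) :=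
        continuousOn_id.mul ((hψ.continuous.comp_continuousOn h0).sub continuousOn_const)
      have h4 : ContinuousOn (fun s : ℝ => s ^ 2 / 2 * c) (Icc 0 t) := by fun_prop
      exact (h2.add h3).add h4
    · intro s hs
      rw [interior_Icc] at hs
      have hwy : HasDerivAt (fun τ => u τ - y) (u' s) s := (hud s hs.1).sub_const y
      have hq : HasDerivAt (fun τ => ⟪u τ - y, u τ - y⟫ / 2) (⟪u' s, u s - y⟫) s := by
        have := (HasDerivAt.inner ℝ hwy hwy).div_const 2
        refine this.congr_deriv ?_
        rw [real_inner_comm]; ring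
      have hp : HasDerivAt (fun τ => τ * (ψ (u τ) - ψ y))
          (1 * (ψ (u s) - ψ y) + s * ⟪gradient ψ (u s), u' s⟫) s :=
        (hasDerivAt_id s).mul ((hψu s hs.1).sub_const (ψ y))
      have hr : HasDerivAt (fun τ => τ^2/2 * c) (2 * s ^ 1 / 2 * c) s :=
        ((hasDerivAt_pow 2 s).div_const 2).mul_const c
      exact (((hq.add hp).add hr).hasDerivWithinAt)
    · intro s hs
      rw [interior_Icc] at hs
      have hsub := aux_subgrad ψ hψ hconv (u s) y
      have hGu : gradient ψ (u s) = -(u' s) := by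
        rw [hode s (le_of_lt hs.1)]; simp
      have e1 : ⟪u' s, u s - y⟫ = ⟪gradient ψ (u s), y - u s⟫ := by
        rw [hGu, inner_neg_left, ← inner_neg_right]
        congr 1; abel
      have e2 : ⟪gradient ψ (u s), u' s⟫ = -⟪u' s, u' s⟫ := by
        rw [hGu, inner_neg_left]
      have hNst : ⟪u' t, u' t⟫ ≤ ⟪u' s, u' s⟫ :=
        NA (le_of_lt hs.1) (le_of_lt ht) hs.2.le
      have hprod : s * (c - ⟪u' s, u' s⟫) ≤ 0 :=
        mul_nonpos_of_nonneg_of_nonpos hs.1.le (by rw [hc]; linarith)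
      rw [e1, e2]
      have : 2 * s ^ 1 / 2 * c = s * c := by ring
      rw [this]
      nlinarith [hsub, hprod]
  -- conclude from Φ t ≤ Φ 0
  have hΦt : Φ t ≤ Φ 0 := hΦanti (left_mem_Icc.mpr ht.le) (right_mem_Icc.mpr ht.le) ht.le
  obtain ⟨a, ha⟩ : ∃ a : ℝ, ‖gradient ψ y‖ = a := ⟨_, rfl⟩
  obtain ⟨r, hr⟩ : ∃ r : ℝ, ‖u t - y‖ = r := ⟨_, rfl⟩
  obtain ⟨r0, hr0⟩ : ∃ r0 : ℝ, ‖u 0 - y‖ = r0 := ⟨_, rfl⟩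
  have ha0 : 0 ≤ a := ha ▸ norm_nonneg _
  have hr00 : 0 ≤ r0 := hr0 ▸ norm_nonneg _
  have hrr : 0 ≤ r := hr ▸ norm_nonneg _
  have hinner_t : ⟪u t - y, u t - y⟫ = r^2 := by
    rw [real_inner_self_eq_norm_sq, hr]
  have hinner_0 : ⟪u 0 - y, u 0 - y⟫ = r0^2 := by
    rw [real_inner_self_eq_norm_sq, hr0]
  have hcval : c = ‖u' t‖^2 := by rw [hc, real_inner_self_eq_norm_sq]
  have hsuby := aux_subgrad ψ hψ hconv y (u t)
  have hCS : -(a * r) ≤ ⟪gradient ψ y, u t - y⟫ := by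
    have h1 : ⟪gradient ψ y, y - u t⟫ ≤ a * r := by
      calc ⟪gradient ψ y, y - u t⟫ ≤ ‖gradient ψ y‖ * ‖y - u t‖ := real_inner_le_norm _ _
        _ = a * r := by rw [← ha, ← hr, norm_sub_rev]
    have h2 : ⟪gradient ψ y, y - u t⟫ = -⟪gradient ψ y, u t - y⟫ := by
      rw [← inner_neg_right]; congr 1; abel
    linarith
  have hΦ0 : Φ 0 = r0^2 / 2 := by
    simp [hΦ, hinner_0, hr0]
  have hΦtval : Φ t = r^2/2 + t * (ψ (u t) - ψ y) + t^2/2 * ‖u' t‖^2 := by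
    simp only [hΦ]
    rw [hinner_t, hcval]
  have key : t^2 * ‖u' t‖^2 ≤ r0^2 + t^2 * a^2 := by
    have h3 : t * (ψ (u t) - ψ y) ≥ -(t * (a * r)) := by
      have := mul_le_mul_of_nonneg_left (le_trans hCS hsuby) ht.le
      nlinarith [mul_le_mul_of_nonneg_left (le_trans hCS hsuby) ht.le]
    have h4 : r^2/2 + t * (ψ (u t) - ψ y) + t^2/2 * ‖u' t‖^2 ≤ r0^2/2 := by
      rw [← hΦtval, ← hΦ0]; exact hΦt
    nlinarith [sq_nonneg (r - t * a)]
  have hX : 0 ≤ ‖u' t‖ := norm_nonneg _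
  have hsq : (t * ‖u' t‖) ^ 2 ≤ (t * a + r0) ^ 2 := by
    nlinarith [mul_nonneg (mul_nonneg ht.le ha0) hr00]
  have htX : t * ‖u' t‖ ≤ t * a + r0 :=
    (pow_le_pow_iff_left₀ (mul_nonneg ht.le hX)
      (by positivity) two_ne_zero).mp hsq
  have heq : ‖gradient ψ y‖ + 1/t * ‖u 0 - y‖ = (t * a + r0) / t := by
    rw [ha, hr0]; field_simp
  rw [heq, le_div_iff₀ ht]
  linarith [htX]
end

section
/- Assume ψ is convex with Crit_ψ = ∅, and let u be a global solution of the first-order gradient system (DS-1). Then lim_{t→∞} ‖u(t)‖ = +∞. -/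
open Filter MeasureTheory Set InnerProductSpace Topology


section Aux
variable {H : Type*} [NormedAddCommGroup H] [InnerProductSpace ℝ H] [CompleteSpace H]

local notation "⟪" x ", " y "⟫" => @inner ℝ _ _ x y

lemma aux_antitoneOn {f f' : ℝ → ℝ}
    (hf : ∀ t ∈ Ici (0:ℝ), HasDerivWithinAt f (f' t) (Ici 0) t)
    (hf' : ∀ t ∈ Ici (0:ℝ), f' t ≤ 0) : AntitoneOn f (Ici 0) := by
  apply antitoneOn_of_deriv_nonpos (convex_Ici 0)
    (fun t ht => (hf t ht).continuousWithinAt)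
  · intro t ht
    rw [interior_Ici] at ht
    exact ((hf t (mem_Ici.2 ht.le)).hasDerivAt (Ici_mem_nhds ht)).differentiableAt.differentiableWithinAt
  · intro t ht
    rw [interior_Ici] at ht
    rw [((hf t (mem_Ici.2 ht.le)).hasDerivAt (Ici_mem_nhds ht)).deriv]
    exact hf' t (mem_Ici.2 ht.le)

lemma aux_grad_ineq (ψ : H → ℝ) (hd : Differentiable ℝ ψ) (hconv : ConvexOn ℝ univ ψ)
    (x y : H) : ψ x + ⟪gradient ψ x, y - x⟫ ≤ ψ y := by
  rcases eq_or_ne y x with rfl | hne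
  · simp
  have hline : ∀ s : ℝ, HasDerivAt (fun s : ℝ => x + s • (y - x)) (y - x) s := fun s => by
    simpa using ((hasDerivAt_id s).smul_const (y - x)).const_add x
  set h : ℝ → ℝ := fun s => ψ (x + s • (y - x)) with hh_def
  have hh : ∀ s : ℝ, HasDerivAt h ⟪gradient ψ (x + s • (y - x)), y - x⟫ s := by
    intro s
    have := ((hd _).hasGradientAt.hasFDerivAt).comp_hasDerivAt s (hline s)
    rw [hh_def]
    rw [InnerProductSpace.toDual_apply_apply] at this
    exact this
  have hhconv : ConvexOn ℝ univ h := by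
    have := hconv.comp_affineMap (AffineMap.lineMap x y : ℝ →ᵃ[ℝ] H)
    have he : h = ψ ∘ (AffineMap.lineMap x y : ℝ →ᵃ[ℝ] H) := by
      funext s
      simp [hh_def, AffineMap.lineMap_apply_module]
      ring_nf
      congr 1
      module
    rw [he]
    simpa using this
  have := hhconv.le_slope_of_hasDerivAt (mem_univ 0) (mem_univ 1) zero_lt_one (hh 0)
  rw [slope_def_field] at this
  have h0 : h 0 = ψ x := by simp [hh_def]
  have h1 : h 1 = ψ y := by simp [hh_def]
  simp [h0, h1] at this
  have hgx : ⟪gradient ψ x, y - x⟫ = fderiv ℝ ψ x y - fderiv ℝ ψ x x := by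
    simp [gradient, inner_sub_right, InnerProductSpace.toDual_symm_apply]
  linarith

end Aux

/-- Proposition 4 (ii): if `ψ` is convex with `Crit ψ = ∅` and `u` is a global solution of
`u' = -∇ψ(u)`, then `‖u(t)‖ → +∞` as `t → ∞`. -/
theorem stmt_12 {H : Type*} [NormedAddCommGroup H] [InnerProductSpace ℝ H] [CompleteSpace H]
    (ψ : H → ℝ) (hψ : ContDiff ℝ 2 ψ) (hconv : ConvexOn ℝ univ ψ)
    (hcrit : {x : H | gradient ψ x = 0} = ∅)
    (u u' : ℝ → H)
    (hu : ∀ t ∈ Ici (0:ℝ), HasDerivWithinAt u (u' t) (Ici 0) t)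
    (hode : ∀ t ∈ Ici (0:ℝ), u' t = -(gradient ψ (u t))) :
    Tendsto (fun t => ‖u t‖) atTop atTop := by
  by_contra hT
  rw [tendsto_atTop] at hT
  push_neg at hT
  obtain ⟨R, hR⟩ := hT
  -- hR : ∃ᶠ t in atTop, ‖u t‖ < R
  have hd : Differentiable ℝ ψ := hψ.differentiable (by norm_num)
  have hgrad := aux_grad_ineq ψ hd hconv
  set g : ℝ → ℝ := fun t => ψ (u t) with hg_def
  -- derivative of g
  have hgder : ∀ t ∈ Ici (0:ℝ),
      HasDerivWithinAt g (-‖gradient ψ (u t)‖ ^ 2) (Ici 0) t := by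
    intro t ht
    have h1 := ((hd (u t)).hasGradientAt.hasFDerivAt).comp_hasDerivWithinAt t (hu t ht)
    have h2 : (InnerProductSpace.toDual ℝ H (gradient ψ (u t))) (u' t)
        = -‖gradient ψ (u t)‖ ^ 2 := by
      rw [hode t ht]
      simp only [InnerProductSpace.toDual_apply_apply, inner_neg_right,
        real_inner_self_eq_norm_sq]
    rw [h2] at h1
    exact h1
  have hganti : AntitoneOn g (Ici 0) :=
    aux_antitoneOn hgder fun t ht => neg_nonpos.2 (sq_nonneg _)
  -- lower bound for g
  have hm : ∀ t ∈ Ici (0:ℝ), ψ 0 - ‖gradient ψ 0‖ * R ≤ g t := by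
    intro t ht
    obtain ⟨s, hts, hsR⟩ := ((eventually_ge_atTop t).and_frequently hR).exists
    have hs0 : s ∈ Ici (0:ℝ) := le_trans ht hts
    have h1 : g s ≤ g t := hganti ht hs0 hts
    have h2 := hgrad 0 (u s)
    have h3 : -(‖gradient ψ 0‖ * ‖u s‖) ≤ inner ℝ (gradient ψ 0) (u s - 0) := by
      simp only [sub_zero]
      have := abs_real_inner_le_norm (gradient ψ 0) (u s)
      linarith [neg_abs_le (inner ℝ (gradient ψ 0) (u s) : ℝ)]
    have h4 : ‖gradient ψ 0‖ * ‖u s‖ ≤ ‖gradient ψ 0‖ * R :=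
      mul_le_mul_of_nonneg_left hsR.le (norm_nonneg _)
    have : ψ 0 - ‖gradient ψ 0‖ * R ≤ ψ (u s) := by linarith
    linarith
  set m := ψ 0 - ‖gradient ψ 0‖ * R with hm_def
  set S : Set ℝ := g '' Ici 0 with hS_def
  have hSne : S.Nonempty := ⟨g 0, mem_image_of_mem g self_mem_Ici⟩
  have hSbdd : BddBelow S := ⟨m, by rintro y ⟨t, ht, rfl⟩; exact hm t ht⟩
  set c : ℝ := sInf S with hc_def
  have hc_le : ∀ t ∈ Ici (0:ℝ), c ≤ g t := fun t ht =>
    csInf_le hSbdd (mem_image_of_mem g ht)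
  -- c is a lower bound for ψ everywhere
  have hcmin : ∀ x, c ≤ ψ x := by
    intro x
    by_contra hx
    push_neg at hx
    set δ := 2 * (c - ψ x) with hδ_def
    have hδpos : 0 < δ := by rw [hδ_def]; linarith
    set f : ℝ → ℝ := fun t => (inner ℝ (u t - x) (u t - x) : ℝ) + δ * t with hf_def
    have hfder : ∀ t ∈ Ici (0:ℝ), HasDerivWithinAt f
        (((inner ℝ (u t - x) (u' t) : ℝ) + (inner ℝ (u' t) (u t - x) : ℝ)) + δ) (Ici 0) t := by
      intro t ht
      have h1 := (hu t ht).sub_const x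
      have h2 := HasDerivWithinAt.inner ℝ h1 h1
      have h3 : HasDerivWithinAt (fun t : ℝ => δ * t) δ (Ici 0) t := by
        simpa using (hasDerivWithinAt_id t (Ici 0)).const_mul δ
      exact h2.add h3
    have hnonpos : ∀ t ∈ Ici (0:ℝ),
        (((inner ℝ (u t - x) (u' t) : ℝ) + (inner ℝ (u' t) (u t - x) : ℝ)) + δ) ≤ 0 := by
      intro t ht
      have h1 := hgrad (u t) x
      have h2 : (inner ℝ (u t - x) (u' t) : ℝ) = (inner ℝ (gradient ψ (u t)) (x - u t) : ℝ) := by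
        rw [hode t ht, real_inner_comm, inner_neg_left, ← inner_neg_right]
        congr 1
        abel
      have h3 : (inner ℝ (u' t) (u t - x) : ℝ) = (inner ℝ (gradient ψ (u t)) (x - u t) : ℝ) := by
        rw [hode t ht, inner_neg_left, ← inner_neg_right]
        congr 1
        abel
      have h4 : c ≤ g t := hc_le t ht
      have h5 : g t = ψ (u t) := rfl
      rw [h2, h3, hδ_def]
      linarith
    have hanti := aux_antitoneOn hfder hnonpos
    set T := max ((f 0 + 1) / δ) 0 with hT_def
    have hT0 : (0:ℝ) ≤ T := le_max_right _ _
    have hfle : f T ≤ f 0 := hanti self_mem_Ici hT0 hT0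
    have hinner_nonneg : (0:ℝ) ≤ (inner ℝ (u T - x) (u T - x) : ℝ) := real_inner_self_nonneg
    have hfT : δ * T ≤ f T := by rw [hf_def]; dsimp only; linarith
    have hTbig : f 0 + 1 ≤ δ * T := by
      have h1 : (f 0 + 1) / δ ≤ T := le_max_left _ _
      calc f 0 + 1 = δ * ((f 0 + 1) / δ) := by field_simp
        _ ≤ δ * T := mul_le_mul_of_nonneg_left h1 hδpos.le
    linarith
  -- sublevel sets intersected with the ball
  set C : ℕ → Set H := fun n => {x | ψ x ≤ c + 1 / (n + 1)} ∩ Metric.closedBall 0 R with hC_def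
  have hCconv : ∀ n, Convex ℝ (C n) := by
    intro n
    apply Convex.inter _ (convex_closedBall 0 R)
    have := hconv.convex_le (c + 1 / (n + 1))
    simpa using this
  have hCclosed : ∀ n, IsClosed (C n) := fun n =>
    ((isClosed_le (hψ.continuous) continuous_const).preimage continuous_id).inter
      Metric.isClosed_closedBall
  have hCne : ∀ n, (C n).Nonempty := by
    intro n
    have hpos : (0:ℝ) < 1 / (n + 1) := by positivity
    obtain ⟨y, hyS, hy⟩ := exists_lt_of_csInf_lt hSne (lt_add_of_pos_right c hpos)
    obtain ⟨t₀, ht₀, rfl⟩ := hyS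
    obtain ⟨t, htt₀, htR⟩ := ((eventually_ge_atTop t₀).and_frequently hR).exists
    refine ⟨u t, ?_, ?_⟩
    · have hgt : g t ≤ g t₀ := hganti ht₀ (le_trans ht₀ htt₀) htt₀
      show ψ (u t) ≤ c + 1 / (n + 1)
      linarith
    · simpa [Metric.mem_closedBall, dist_zero_right] using htR.le
  have hCmono : ∀ {n₁ n₂ : ℕ}, n₁ ≤ n₂ → C n₂ ⊆ C n₁ := by
    intro n₁ n₂ h x hx
    have h12 : (1:ℝ) / (n₂ + 1) ≤ 1 / (n₁ + 1) := by
      apply one_div_le_one_div_of_le (by positivity)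
      exact_mod_cast by omega
    have hx1 : ψ x ≤ c + 1 / (n₂ + 1) := hx.1
    exact ⟨by show ψ x ≤ c + 1 / (n₁ + 1); linarith, hx.2⟩
  -- find a common point: it is a minimizer, contradiction
  have hmin : ∃ xbar : H, ∀ n, xbar ∈ C n := by
    have hcomplete : ∀ n, IsComplete (C n) := fun n => (hCclosed n).isComplete
    choose x hxC hxnorm using fun n =>
      exists_norm_eq_iInf_of_complete_convex (hCne n) (hcomplete n) (hCconv n) 0
    set d : ℕ → ℝ := fun n => ⨅ w : C n, ‖(0:H) - w‖ with hd_def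
    have hxd : ∀ n, ‖x n‖ = d n := fun n => by
      have := hxnorm n
      rwa [zero_sub, norm_neg] at this
    have hdle : ∀ n, ∀ w ∈ C n, d n ≤ ‖w‖ := by
      intro n w hw
      have hb : BddBelow (range fun w : C n => ‖(0:H) - w‖) :=
        ⟨0, by rintro _ ⟨w, rfl⟩; positivity⟩
      have := ciInf_le hb (⟨w, hw⟩ : C n)
      rwa [zero_sub, norm_neg] at this
    have hdnonneg : ∀ n, 0 ≤ d n := fun n => (hxd n) ▸ norm_nonneg _
    have hdmono : Monotone d := by
      intro n₁ n₂ h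
      have h1 := hdle n₁ (x n₂) (hCmono h (hxC n₂))
      rwa [hxd n₂] at h1
    have hdboundR : ∀ n, d n ≤ R := fun n => by
      rw [← hxd n]
      have := (hxC n).2
      simpa [Metric.mem_closedBall, dist_zero_right] using this
    have hbdd : BddAbove (range d) := ⟨R, by rintro _ ⟨n, rfl⟩; exact hdboundR n⟩
    set L : ℝ := ⨆ n, d n with hL_def
    have hdL : Tendsto d atTop (𝓝 L) := tendsto_atTop_ciSup hdmono hbdd
    have hdleL : ∀ n, d n ≤ L := fun n => le_ciSup hbdd n
    have hkey : ∀ {n₁ n₂ : ℕ}, n₁ ≤ n₂ → ‖x n₁ - x n₂‖ ^ 2 ≤ 2 * (L ^ 2 - d n₁ ^ 2) := by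
      intro n₁ n₂ h
      have hz : (1/2 : ℝ) • x n₁ + (1/2 : ℝ) • x n₂ ∈ C n₁ :=
        hCconv n₁ (hxC n₁) (hCmono h (hxC n₂)) (by norm_num) (by norm_num) (by norm_num)
      have h1 : d n₁ ≤ ‖(1/2 : ℝ) • x n₁ + (1/2 : ℝ) • x n₂‖ := hdle n₁ _ hz
      have h2 : ‖(1/2 : ℝ) • x n₁ + (1/2 : ℝ) • x n₂‖ = ‖x n₁ + x n₂‖ / 2 := by
        rw [← smul_add, norm_smul]
        simp [Real.norm_eq_abs, abs_of_pos]
        ring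
      have hpar := parallelogram_law_with_norm ℝ (x n₁) (x n₂)
      have hd1 : ‖x n₁‖ = d n₁ := hxd n₁
      have hd2 : ‖x n₂‖ = d n₂ := hxd n₂
      have hd2L : d n₂ ≤ L := hdleL n₂
      have hd12 : d n₁ ≤ d n₂ := hdmono h
      nlinarith [hdnonneg n₁, norm_nonneg (x n₁ + x n₂)]
    have hcauchy : CauchySeq x := by
      apply cauchySeq_of_le_tendsto_0 (fun N => Real.sqrt (2 * (L ^ 2 - d N ^ 2)))
      · intro n₁ n₂ N h1 h2
        have key : ∀ {a b : ℕ}, N ≤ a → a ≤ b → dist (x a) (x b) ≤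
            Real.sqrt (2 * (L ^ 2 - d N ^ 2)) := by
          intro a b hNa hab
          rw [dist_eq_norm]
          have h3 := hkey hab
          have h4 : d N ≤ d a := hdmono hNa
          have h5 : ‖x a - x b‖ ^ 2 ≤ 2 * (L ^ 2 - d N ^ 2) := by nlinarith [hdnonneg N]
          have h6 : ‖x a - x b‖ = Real.sqrt (‖x a - x b‖ ^ 2) :=
            (Real.sqrt_sq (norm_nonneg _)).symm
          rw [h6]
          exact Real.sqrt_le_sqrt h5
        rcases le_total n₁ n₂ with hc | hc
        · exact key h1 hc
        · rw [dist_comm]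
          exact key h2 hc
      · have h0 : Tendsto (fun N => 2 * (L ^ 2 - d N ^ 2)) atTop (𝓝 0) := by
          have h1 : Tendsto (fun N => d N ^ 2) atTop (𝓝 (L ^ 2)) := hdL.pow 2
          have h2 := (h1.const_sub (L ^ 2)).const_mul 2
          simpa using h2
        exact (Real.continuous_sqrt.tendsto' 0 0 (by simp)).comp h0
    obtain ⟨xbar, hxlim⟩ := cauchySeq_tendsto_of_complete hcauchy
    refine ⟨xbar, fun n => ?_⟩
    apply (hCclosed n).mem_of_tendsto hxlim
    filter_upwards [eventually_ge_atTop n] with m hm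
    exact hCmono hm (hxC m)
  obtain ⟨xbar, hxbar⟩ := hmin
  have hψxbar : ψ xbar ≤ c := by
    refine le_of_forall_pos_le_add fun ε hε => ?_
    obtain ⟨n, hn⟩ := exists_nat_one_div_lt hε
    have := (hxbar n).1
    simp only [mem_setOf_eq] at this
    linarith
  have hlocmin : IsLocalMin ψ xbar :=
    Filter.Eventually.of_forall fun y => le_trans hψxbar (hcmin y)
  have : gradient ψ xbar = 0 := by
    rw [gradient, hlocmin.fderiv_eq_zero, map_zero]
  have : xbar ∈ ({x : H | gradient ψ x = 0} : Set H) := this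
  rw [hcrit] at this
  exact this
end

section
/- Let ψ₁, ψ₂ : H → ℝ be convex functions of class C² such that ‖∇ψ₁(z)‖ = ‖∇ψ₂(z)‖ for all z ∈ H and inf_{z ∈ H} ‖∇ψ₁(z)‖ = 0. Then there exists a constant c ∈ ℝ such that ψ₁(x) = ψ₂(x) + c for all x ∈ H. -/
open Filter MeasureTheory Set InnerProductSpace Topology

local notation "⟪" x ", " y "⟫" => @inner ℝ _ _ x y

namespace Stmt14

variable {H : Type*} [NormedAddCommGroup H] [InnerProductSpace ℝ H] [CompleteSpace H]

theorem inner_grad (f : H → ℝ) (x v : H) : ⟪gradient f x, v⟫ = fderiv ℝ f x v :=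
  toDual_symm_apply

theorem contDiff_grad {f : H → ℝ} (hf : ContDiff ℝ 2 f) :
    ContDiff ℝ 1 (fun x => gradient f x) :=
  (toDual ℝ H).symm.contDiff.comp (hf.fderiv_right (by norm_num))

theorem grad_ineq {f : H → ℝ} (hf : ContDiff ℝ 2 f) (hc : ConvexOn ℝ univ f) (x y : H) :
    f x + ⟪gradient f x, y - x⟫ ≤ f y := by
  have hd : HasFDerivAt f (fderiv ℝ f x) x :=
    ((hf.differentiable two_ne_zero) x).hasFDerivAt
  have hline : HasDerivAt (fun t : ℝ => x + t • (y - x)) (y - x) 0 := by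
    simpa using ((hasDerivAt_id (0:ℝ)).smul_const (y - x)).const_add x
  have hd' : HasFDerivAt f (fderiv ℝ f x) (x + (0:ℝ) • (y - x)) := by simpa using hd
  have hcomp : HasDerivAt (fun t : ℝ => f (x + t • (y - x))) (fderiv ℝ f x (y - x)) 0 :=
    hd'.comp_hasDerivAt (0:ℝ) hline
  have hslope := hasDerivAt_iff_tendsto_slope.1 hcomp
  have hslope' : Tendsto (slope (fun t : ℝ => f (x + t • (y - x))) 0) (𝓝[>] 0)
      (𝓝 (fderiv ℝ f x (y - x))) :=
    hslope.mono_left (nhdsWithin_mono 0 (fun t ht => ne_of_gt ht))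
  have hev : ∀ᶠ t in 𝓝[>] (0:ℝ), slope (fun t : ℝ => f (x + t • (y - x))) 0 t ≤ f y - f x := by
    filter_upwards [Ioc_mem_nhdsGT_of_mem (Set.mem_Ico.2 ⟨le_refl (0:ℝ), zero_lt_one⟩)] with t ht
    have h01 : (0:ℝ) < t := ht.1
    have hcv := hc.2 (mem_univ x) (mem_univ y)
      (show (0:ℝ) ≤ 1 - t by linarith [ht.2]) (show (0:ℝ) ≤ t from le_of_lt h01)
      (show (1 - t) + t = 1 by ring)
    have hpt : (1 - t) • x + t • y = x + t • (y - x) := by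
      rw [sub_smul, one_smul, smul_sub]; abel
    rw [hpt] at hcv
    simp only [smul_eq_mul] at hcv
    have key : f (x + t • (y - x)) - f x ≤ t * (f y - f x) := by nlinarith
    have hsl : slope (fun s : ℝ => f (x + s • (y - x))) 0 t
        = (f (x + t • (y - x)) - f x) / t := by
      rw [slope_def_field]
      norm_num
    rw [hsl, div_le_iff₀ h01]
    nlinarith [key]
  have := le_of_tendsto hslope' hev
  have h0 : ⟪gradient f x, y - x⟫ = fderiv ℝ f x (y - x) := inner_grad f x (y - x)
  linarith [this, h0.le, h0.ge]

theorem grad_mono {f : H → ℝ} (hf : ContDiff ℝ 2 f) (hc : ConvexOn ℝ univ f) (x y : H) :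
    0 ≤ ⟪gradient f x - gradient f y, x - y⟫ := by
  have h1 := grad_ineq hf hc x y
  have h2 := grad_ineq hf hc y x
  have e1 : ⟪gradient f x, y - x⟫ = ⟪gradient f x, y⟫ - ⟪gradient f x, x⟫ := inner_sub_right _ _ _
  have e2 : ⟪gradient f y, x - y⟫ = ⟪gradient f y, x⟫ - ⟪gradient f y, y⟫ := inner_sub_right _ _ _
  have e3 : ⟪gradient f x - gradient f y, x - y⟫
      = (⟪gradient f x, x⟫ - ⟪gradient f x, y⟫) - (⟪gradient f y, x⟫ - ⟪gradient f y, y⟫) := by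
    rw [inner_sub_left, inner_sub_right, inner_sub_right]
  rw [e1] at h1; rw [e2] at h2; rw [e3]; linarith

theorem hess_psd {f : H → ℝ} (hf : ContDiff ℝ 2 f) (hc : ConvexOn ℝ univ f) (x w : H) :
    0 ≤ ⟪fderiv ℝ (fun y => gradient f y) x w, w⟫ := by
  set A := fun y => gradient f y with hA_def
  have hA : HasFDerivAt A (fderiv ℝ A x) x :=
    (((contDiff_grad hf).differentiable one_ne_zero) x).hasFDerivAt
  have hcn : Tendsto (fun n : ℕ => ‖((n:ℝ) + 1)‖) atTop atTop := by
    have : Tendsto (fun n : ℕ => ((n:ℝ) + 1)) atTop atTop :=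
      tendsto_atTop_add_const_right atTop 1 tendsto_natCast_atTop_atTop
    refine this.congr (fun n => ?_)
    rw [Real.norm_eq_abs, abs_of_nonneg (by positivity)]
  have hlim := hA.lim w (c := fun n : ℕ => ((n:ℝ) + 1)) hcn
  have hlim2 : Tendsto (fun n : ℕ =>
      ⟪((n:ℝ) + 1) • (A (x + ((n:ℝ) + 1)⁻¹ • w) - A x), w⟫) atTop
      (𝓝 ⟪fderiv ℝ A x w, w⟫) :=
    hlim.inner tendsto_const_nhds
  refine ge_of_tendsto hlim2 (Eventually.of_forall (fun n => ?_))
  have hn1 : (0:ℝ) < (n:ℝ) + 1 := by positivity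
  set y := x + ((n:ℝ) + 1)⁻¹ • w with hy
  have hmono := grad_mono hf hc y x
  have hyx : y - x = ((n:ℝ) + 1)⁻¹ • w := by rw [hy]; abel
  rw [hyx, real_inner_smul_right] at hmono
  have hnn : (0:ℝ) ≤ ⟪gradient f y - gradient f x, w⟫ := by
    by_contra hcon
    push_neg at hcon
    have h2 : (0:ℝ) < ((n:ℝ) + 1)⁻¹ := by positivity
    nlinarith
  rw [real_inner_smul_left]
  exact mul_nonneg (by positivity) hnn

theorem grad_fderiv_symm {f : H → ℝ} (hf : ContDiff ℝ 2 f) (x v w : H) :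
    ⟪fderiv ℝ (fun y => gradient f y) x v, w⟫ = ⟪fderiv ℝ (fun y => gradient f y) x w, v⟫ := by
  set F1 := fderiv ℝ f with hF1
  set F2 := fderiv ℝ F1 x with hF2
  have hdf : ∀ y, HasFDerivAt f (F1 y) y := fun y => ((hf.differentiable two_ne_zero) y).hasFDerivAt
  have hF1d : HasFDerivAt F1 F2 x :=
    (((hf.fderiv_right (by norm_num)).differentiable one_ne_zero) x).hasFDerivAt
  have hsymm := second_derivative_symmetric hdf hF1d
  have hAx : HasFDerivAt (fun y => gradient f y) (fderiv ℝ (fun y => gradient f y) x) x :=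
    (((contDiff_grad hf).differentiable one_ne_zero) x).hasFDerivAt
  have key : ∀ u z : H, F2 u z = ⟪z, fderiv ℝ (fun y => gradient f y) x u⟫ := by
    intro u z
    have h1 : HasFDerivAt (fun y => F1 y z)
        ((ContinuousLinearMap.apply ℝ ℝ z).comp F2) x :=
      (ContinuousLinearMap.apply ℝ ℝ z).hasFDerivAt.comp x hF1d
    have h2 : HasFDerivAt (fun y => ⟪z, gradient f y⟫)
        ((innerSL ℝ z).comp (fderiv ℝ (fun y => gradient f y) x)) x :=
      (innerSL ℝ z).hasFDerivAt.comp x hAx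
    have hfun : (fun y => ⟪z, gradient f y⟫) = (fun y => F1 y z) := by
      funext y
      rw [real_inner_comm]
      exact inner_grad f y z
    rw [hfun] at h2
    have huniq := h1.unique h2
    have := congrArg (fun (L : H →L[ℝ] ℝ) => L u) huniq
    simpa using this
  have e1 := key v w
  have e2 := key w v
  rw [real_inner_comm] at e1
  rw [real_inner_comm] at e2
  rw [← e1, ← e2]
  exact hsymm v w

theorem hess_ident {f g : H → ℝ} (hf : ContDiff ℝ 2 f) (hg : ContDiff ℝ 2 g)
    (heq : ∀ z : H, ‖gradient f z‖ = ‖gradient g z‖) (x : H) :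
    fderiv ℝ (fun y => gradient f y) x (gradient f x)
      = fderiv ℝ (fun y => gradient g y) x (gradient g x) := by
  set A := fun y => gradient f y with hA_def
  set B := fun y => gradient g y with hB_def
  have hAc : ContDiff ℝ 1 A := contDiff_grad hf
  have hBc : ContDiff ℝ 1 B := contDiff_grad hg
  -- derivative of ‖A ·‖² in direction v equals 2⟪A' v, A x⟫
  have key : ∀ v : H, ⟪fderiv ℝ A x v, A x⟫ = ⟪fderiv ℝ B x v, B x⟫ := by
    intro v
    have hAx : HasFDerivAt A (fderiv ℝ A x) x := ((hAc.differentiable one_ne_zero) x).hasFDerivAt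
    have hBx : HasFDerivAt B (fderiv ℝ B x) x := ((hBc.differentiable one_ne_zero) x).hasFDerivAt
    have hsa : HasFDerivAt (fun y => ⟪A y, A y⟫)
        ((fderivInnerCLM ℝ (A x, A x)).comp ((fderiv ℝ A x).prod (fderiv ℝ A x))) x :=
      hAx.inner ℝ hAx
    have hsb : HasFDerivAt (fun y => ⟪B y, B y⟫)
        ((fderivInnerCLM ℝ (B x, B x)).comp ((fderiv ℝ B x).prod (fderiv ℝ B x))) x :=
      hBx.inner ℝ hBx
    have hfeq : (fun y => ⟪A y, A y⟫) = (fun y => ⟪B y, B y⟫) := by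
      funext y
      rw [real_inner_self_eq_norm_sq, real_inner_self_eq_norm_sq]
      rw [show ‖A y‖ = ‖B y‖ from heq y]
    rw [hfeq] at hsa
    have := hsa.unique hsb
    have happ := congrArg (fun (L : H →L[ℝ] ℝ) => L v) this
    simp only [ContinuousLinearMap.comp_apply, ContinuousLinearMap.prod_apply,
      fderivInnerCLM_apply] at happ
    have e1 : ⟪A x, fderiv ℝ A x v⟫ = ⟪fderiv ℝ A x v, A x⟫ := real_inner_comm _ _
    have e2 : ⟪B x, fderiv ℝ B x v⟫ = ⟪fderiv ℝ B x v, B x⟫ := real_inner_comm _ _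
    rw [e1, e2] at happ
    linarith
  apply ext_inner_right ℝ
  intro w
  calc ⟪fderiv ℝ A x (A x), w⟫ = ⟪fderiv ℝ A x w, A x⟫ := grad_fderiv_symm hf x (A x) w
    _ = ⟪fderiv ℝ B x w, B x⟫ := key w
    _ = ⟪fderiv ℝ B x (B x), w⟫ := grad_fderiv_symm hg x w (B x)

/-! ### Flow solutions -/

def IsSolV (V : H → H) (x₀ : H) (b : ℝ) (γ : ℝ → H) : Prop :=
  γ 0 = x₀ ∧ ∀ t ∈ Icc (0:ℝ) b, HasDerivWithinAt γ (V (γ t)) (Icc 0 b) t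

section Flow

variable {f g : H → ℝ} {x₀ : H} {b : ℝ} {γ : ℝ → H}

theorem grad_comp_deriv (hf : ContDiff ℝ 2 f)
    (hsol : ∀ t ∈ Icc (0:ℝ) b, HasDerivWithinAt γ (-(gradient f (γ t))) (Icc 0 b) t)
    {h : H → ℝ} (hh : ContDiff ℝ 2 h) {t : ℝ} (ht : t ∈ Icc (0:ℝ) b) :
    HasDerivWithinAt (fun s => gradient h (γ s))
      (fderiv ℝ (fun y => gradient h y) (γ t) (-(gradient f (γ t)))) (Icc 0 b) t :=
  ((((contDiff_grad hh).differentiable one_ne_zero) (γ t)).hasFDerivAt).comp_hasDerivWithinAt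
    t (hsol t ht)

theorem slopeSq_antitone (hf : ContDiff ℝ 2 f) (hcf : ConvexOn ℝ univ f)
    (hsol : ∀ t ∈ Icc (0:ℝ) b, HasDerivWithinAt γ (-(gradient f (γ t))) (Icc 0 b) t) :
    AntitoneOn (fun t => ⟪gradient f (γ t), gradient f (γ t)⟫) (Icc 0 b) := by
  have hD : ∀ t ∈ Icc (0:ℝ) b, HasDerivWithinAt
      (fun s => ⟪gradient f (γ s), gradient f (γ s)⟫)
      (⟪gradient f (γ t), fderiv ℝ (fun y => gradient f y) (γ t) (-(gradient f (γ t)))⟫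
        + ⟪fderiv ℝ (fun y => gradient f y) (γ t) (-(gradient f (γ t))), gradient f (γ t)⟫)
      (Icc 0 b) t := by
    intro t ht
    have h1 := grad_comp_deriv hf hsol hf ht
    exact h1.inner ℝ h1
  apply antitoneOn_of_deriv_nonpos (convex_Icc 0 b)
  · exact fun t ht => (hD t ht).continuousWithinAt
  · intro t ht
    rw [interior_Icc] at ht
    exact ((hD t (Ioo_subset_Icc_self ht)).hasDerivAt
      (Icc_mem_nhds ht.1 ht.2)).differentiableAt.differentiableWithinAt
  · intro t ht
    rw [interior_Icc] at ht
    have hda := (hD t (Ioo_subset_Icc_self ht)).hasDerivAt (Icc_mem_nhds ht.1 ht.2)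
    rw [hda.deriv]
    have hpsd := hess_psd hf hcf (γ t) (gradient f (γ t))
    have hneg : fderiv ℝ (fun y => gradient f y) (γ t) (-(gradient f (γ t)))
        = -(fderiv ℝ (fun y => gradient f y) (γ t) (gradient f (γ t))) := map_neg _ _
    rw [hneg, inner_neg_right, inner_neg_left]
    have hcm := real_inner_comm (gradient f (γ t))
      (fderiv ℝ (fun y => gradient f y) (γ t) (gradient f (γ t)))
    linarith

theorem slope_le (hf : ContDiff ℝ 2 f) (hcf : ConvexOn ℝ univ f)
    (hsol : ∀ t ∈ Icc (0:ℝ) b, HasDerivWithinAt γ (-(gradient f (γ t))) (Icc 0 b) t)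
    {t : ℝ} (ht : t ∈ Icc (0:ℝ) b) :
    ‖gradient f (γ t)‖ ≤ ‖gradient f (γ 0)‖ := by
  have h0b : (0:ℝ) ∈ Icc (0:ℝ) b := ⟨le_refl 0, ht.1.trans ht.2⟩
  have hmono := slopeSq_antitone hf hcf hsol h0b ht ht.1
  simp only [real_inner_self_eq_norm_sq] at hmono
  exact le_of_pow_le_pow_left₀ two_ne_zero (norm_nonneg _) hmono

theorem eSq_monotone (hf : ContDiff ℝ 2 f) (hg : ContDiff ℝ 2 g)
    (hcg : ConvexOn ℝ univ g) (heq : ∀ z : H, ‖gradient f z‖ = ‖gradient g z‖)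
    (hsol : ∀ t ∈ Icc (0:ℝ) b, HasDerivWithinAt γ (-(gradient f (γ t))) (Icc 0 b) t) :
    MonotoneOn (fun t => ⟪gradient f (γ t) - gradient g (γ t),
      gradient f (γ t) - gradient g (γ t)⟫) (Icc 0 b) := by
  have hD : ∀ t ∈ Icc (0:ℝ) b, HasDerivWithinAt
      (fun s => ⟪gradient f (γ s) - gradient g (γ s), gradient f (γ s) - gradient g (γ s)⟫)
      (⟪gradient f (γ t) - gradient g (γ t),
          fderiv ℝ (fun y => gradient f y) (γ t) (-(gradient f (γ t)))
          - fderiv ℝ (fun y => gradient g y) (γ t) (-(gradient f (γ t)))⟫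
        + ⟪fderiv ℝ (fun y => gradient f y) (γ t) (-(gradient f (γ t)))
          - fderiv ℝ (fun y => gradient g y) (γ t) (-(gradient f (γ t))),
          gradient f (γ t) - gradient g (γ t)⟫) (Icc 0 b) t := by
    intro t ht
    have h1 := grad_comp_deriv hf hsol hf ht
    have h2 := grad_comp_deriv hf hsol hg ht
    exact (h1.sub h2).inner ℝ (h1.sub h2)
  have hDval : ∀ t : ℝ, fderiv ℝ (fun y => gradient f y) (γ t) (-(gradient f (γ t)))
      - fderiv ℝ (fun y => gradient g y) (γ t) (-(gradient f (γ t)))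
      = fderiv ℝ (fun y => gradient g y) (γ t) (gradient f (γ t) - gradient g (γ t)) := by
    intro t
    rw [map_neg, map_neg, hess_ident hf hg heq (γ t), map_sub]
    abel
  apply monotoneOn_of_deriv_nonneg (convex_Icc 0 b)
  · exact fun t ht => (hD t ht).continuousWithinAt
  · intro t ht
    rw [interior_Icc] at ht
    exact ((hD t (Ioo_subset_Icc_self ht)).hasDerivAt
      (Icc_mem_nhds ht.1 ht.2)).differentiableAt.differentiableWithinAt
  · intro t ht
    rw [interior_Icc] at ht
    have hda := (hD t (Ioo_subset_Icc_self ht)).hasDerivAt (Icc_mem_nhds ht.1 ht.2)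
    rw [hda.deriv, hDval t]
    have hpsd := hess_psd hg hcg (γ t) (gradient f (γ t) - gradient g (γ t))
    have hcm := real_inner_comm (gradient f (γ t) - gradient g (γ t))
      (fderiv ℝ (fun y => gradient g y) (γ t) (gradient f (γ t) - gradient g (γ t)))
    linarith

theorem value_decay (hf : ContDiff ℝ 2 f) (hcf : ConvexOn ℝ univ f)
    (hsol : ∀ t ∈ Icc (0:ℝ) b, HasDerivWithinAt γ (-(gradient f (γ t))) (Icc 0 b) t)
    (hb : 0 ≤ b) :
    f (γ b) + b * ⟪gradient f (γ b), gradient f (γ b)⟫ ≤ f (γ 0) := by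
  set ρT := ⟪gradient f (γ b), gradient f (γ b)⟫ with hρT
  have hχ : ∀ t ∈ Icc (0:ℝ) b, HasDerivWithinAt (fun s => f (γ s) + s * ρT)
      (⟪gradient f (γ t), -(gradient f (γ t))⟫ + ρT) (Icc 0 b) t := by
    intro t ht
    have hfd : HasDerivWithinAt (fun s => f (γ s))
        (fderiv ℝ f (γ t) (-(gradient f (γ t)))) (Icc 0 b) t :=
      (((hf.differentiable two_ne_zero) (γ t)).hasFDerivAt).comp_hasDerivWithinAt t (hsol t ht)
    have hgr : fderiv ℝ f (γ t) (-(gradient f (γ t)))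
        = ⟪gradient f (γ t), -(gradient f (γ t))⟫ := (inner_grad f (γ t) _).symm
    rw [hgr] at hfd
    have hid : HasDerivWithinAt (fun s : ℝ => s * ρT) ((1:ℝ) * ρT) (Icc 0 b) t :=
      (hasDerivWithinAt_id t (Icc 0 b)).mul_const ρT
    simpa using hfd.fun_add hid
  have hanti : AntitoneOn (fun s => f (γ s) + s * ρT) (Icc 0 b) := by
    apply antitoneOn_of_deriv_nonpos (convex_Icc 0 b)
    · exact fun t ht => (hχ t ht).continuousWithinAt
    · intro t ht
      rw [interior_Icc] at ht
      exact ((hχ t (Ioo_subset_Icc_self ht)).hasDerivAt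
        (Icc_mem_nhds ht.1 ht.2)).differentiableAt.differentiableWithinAt
    · intro t ht
      rw [interior_Icc] at ht
      have hda := (hχ t (Ioo_subset_Icc_self ht)).hasDerivAt (Icc_mem_nhds ht.1 ht.2)
      rw [hda.deriv, inner_neg_right]
      have hmono := slopeSq_antitone hf hcf hsol (Ioo_subset_Icc_self ht)
        (right_mem_Icc.2 hb) (le_of_lt ht.2)
      linarith
  have h0 : (0:ℝ) ∈ Icc (0:ℝ) b := left_mem_Icc.2 hb
  have hbb : b ∈ Icc (0:ℝ) b := right_mem_Icc.2 hb
  have := hanti h0 hbb hb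
  simpa using this

theorem displacement (hf : ContDiff ℝ 2 f) (hcf : ConvexOn ℝ univ f)
    (hsol : ∀ t ∈ Icc (0:ℝ) b, HasDerivWithinAt γ (-(gradient f (γ t))) (Icc 0 b) t)
    (hb : 0 ≤ b) :
    ‖γ b - γ 0‖ ≤ ‖gradient f (γ 0)‖ * b := by
  have hbound : ∀ t ∈ Ico (0:ℝ) b, ‖-(gradient f (γ t))‖ ≤ ‖gradient f (γ 0)‖ := by
    intro t ht
    rw [norm_neg]
    exact slope_le hf hcf hsol ⟨ht.1, le_of_lt ht.2⟩
  have := norm_image_sub_le_of_norm_deriv_le_segment' hsol hbound b (right_mem_Icc.2 hb)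
  simpa using this

end Flow

/-! ### Existence machinery -/

section Existence

variable {V : H → H} {x₀ : H} {b : ℝ} {γ : ℝ → H}

theorem isSolV_zero (V : H → H) (x₀ : H) : IsSolV V x₀ 0 (fun _ => x₀) := by
  refine ⟨rfl, ?_⟩
  intro t ht
  rw [Icc_self] at ht ⊢
  simp only [mem_singleton_iff] at ht
  subst ht
  rw [hasDerivWithinAt_iff_tendsto_slope]
  rw [show (({0} : Set ℝ) \ {0}) = ∅ from diff_self, nhdsWithin_empty]
  exact tendsto_bot

theorem IsSolV.restrict (h : IsSolV V x₀ b γ) {a : ℝ} (hab : a ≤ b) : IsSolV V x₀ a γ :=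
  ⟨h.1, fun t ht => (h.2 t (Icc_subset_Icc_right hab ht)).mono (Icc_subset_Icc_right hab)⟩

theorem IsSolV.glue (hγ : IsSolV V x₀ b γ) (hb : 0 ≤ b) {c : ℝ} (hbc : b ≤ c) {δ : ℝ → H}
    (hδb : δ b = γ b)
    (hδ : ∀ t ∈ Icc b c, HasDerivWithinAt δ (V (δ t)) (Icc b c) t) :
    IsSolV V x₀ c (fun t => if t ≤ b then γ t else δ t) := by
  set Γ := fun t => if t ≤ b then γ t else δ t with hΓ
  have hΓγ : EqOn Γ γ (Icc 0 b) := fun s hs => if_pos hs.2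
  have hΓδ : EqOn Γ δ (Icc b c) := by
    intro s hs
    by_cases hsb : s ≤ b
    · have : s = b := le_antisymm hsb hs.1
      subst this
      simp only [hΓ, if_pos le_rfl, hδb]
    · exact if_neg hsb
  constructor
  · show Γ 0 = x₀
    rw [hΓγ (left_mem_Icc.2 hb)]
    exact hγ.1
  · intro t ht
    rcases lt_trichotomy t b with hlt | heqt | hgt
    · have htb : t ∈ Icc (0:ℝ) b := ⟨ht.1, hlt.le⟩
      have h1 : HasDerivWithinAt γ (V (γ t)) (Icc 0 b) t := hγ.2 t htb
      have hset : Icc (0:ℝ) b =ᶠ[𝓝 t] Icc (0:ℝ) c := by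
        rw [Filter.eventuallyEq_set]
        filter_upwards [Iio_mem_nhds hlt] with s hs
        simp only [mem_Icc]
        exact ⟨fun h => ⟨h.1, h.2.trans hbc⟩, fun h => ⟨h.1, le_of_lt hs⟩⟩
      have h1' : HasDerivWithinAt γ (V (γ t)) (Icc 0 c) t :=
        (hasDerivWithinAt_congr_set hset).1 h1
      have hfun : Γ =ᶠ[𝓝 t] γ := by
        filter_upwards [Iio_mem_nhds hlt] with s hs
        exact if_pos (le_of_lt hs)
      have hΓt : Γ t = γ t := if_pos hlt.le
      rw [show V (Γ t) = V (γ t) by rw [hΓt]]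
      exact h1'.congr_of_eventuallyEq (hfun.filter_mono nhdsWithin_le_nhds) hΓt
    · subst heqt
      have h1 : HasDerivWithinAt γ (V (γ t)) (Icc 0 t) t := hγ.2 t ⟨hb, le_rfl⟩
      have h2 : HasDerivWithinAt δ (V (δ t)) (Icc t c) t := hδ t ⟨le_rfl, hbc⟩
      have hΓt : Γ t = γ t := if_pos le_rfl
      have hL : HasDerivWithinAt Γ (V (Γ t)) (Icc 0 t) t := by
        rw [show V (Γ t) = V (γ t) by rw [hΓt]]
        exact h1.congr hΓγ hΓt
      have hR : HasDerivWithinAt Γ (V (Γ t)) (Icc t c) t := by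
        rw [show V (Γ t) = V (δ t) by rw [hΓt, hδb]]
        exact h2.congr hΓδ (by rw [hΓt, hδb])
      have := hL.union hR
      rwa [Icc_union_Icc_eq_Icc hb hbc] at this
    · have htb : t ∈ Icc b c := ⟨hgt.le, ht.2⟩
      have h2 : HasDerivWithinAt δ (V (δ t)) (Icc b c) t := hδ t htb
      have hset : Icc b c =ᶠ[𝓝 t] Icc (0:ℝ) c := by
        rw [Filter.eventuallyEq_set]
        filter_upwards [Ioi_mem_nhds hgt] with s hs
        simp only [mem_Icc]
        exact ⟨fun h => ⟨hb.trans h.1, h.2⟩, fun h => ⟨le_of_lt hs, h.2⟩⟩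
      have h2' : HasDerivWithinAt δ (V (δ t)) (Icc 0 c) t :=
        (hasDerivWithinAt_congr_set hset).1 h2
      have hfun : Γ =ᶠ[𝓝 t] δ := by
        filter_upwards [Ioi_mem_nhds hgt] with s hs
        exact if_neg (not_le.2 hs)
      have hΓt : Γ t = δ t := if_neg (not_le.2 hgt)
      rw [show V (Γ t) = V (δ t) by rw [hΓt]]
      exact h2'.congr_of_eventuallyEq (hfun.filter_mono nhdsWithin_le_nhds) hΓt

theorem local_sol (hV : ContDiff ℝ 1 V) (p : H) :
    ∃ r > (0:ℝ), ∃ e > (0:ℝ), ∀ q : H, q ∈ Metric.closedBall p r → ∀ t₀ : ℝ,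
      ∃ δ : ℝ → H, δ t₀ = q ∧
        ∀ t ∈ Icc t₀ (t₀ + e), HasDerivWithinAt δ (V (δ t)) (Icc t₀ (t₀ + e)) t := by
  obtain ⟨K, s, hs, hlip⟩ := (hV.contDiffAt (x := p)).exists_lipschitzOnWith
  obtain ⟨R₁, hR₁, hball⟩ := Metric.mem_nhds_iff.mp hs
  have hcont : ContinuousAt (fun x => ‖V x‖) p := (hV.continuous.norm).continuousAt
  obtain ⟨R₂, hR₂, hbdd⟩ := Metric.continuousAt_iff.mp hcont 1 zero_lt_one
  have hminpos : 0 < min R₁ R₂ := lt_min hR₁ hR₂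
  set R := min R₁ R₂ / 4 with hRdef
  have hRpos : 0 < R := by positivity
  set C := ‖V p‖ + 1 with hCdef
  have hCpos : 0 < C := by positivity
  refine ⟨R, hRpos, R / C, by positivity, ?_⟩
  intro q hq t₀
  have hsub : Metric.closedBall q R ⊆ Metric.ball p (min R₁ R₂) := by
    intro x hx
    have h1 : dist x q ≤ R := Metric.mem_closedBall.1 hx
    have h2 : dist q p ≤ R := Metric.mem_closedBall.1 hq
    have h3 : dist x p < min R₁ R₂ := by
      calc dist x p ≤ dist x q + dist q p := dist_triangle _ _ _
        _ ≤ 2 * R := by linarith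
        _ < min R₁ R₂ := by rw [hRdef]; linarith
    exact Metric.mem_ball.2 h3
  have hpl : IsPicardLindelof (fun _ : ℝ => V) (tmin := t₀) (tmax := t₀ + R / C)
      ⟨t₀, le_rfl, le_add_of_nonneg_right (by positivity)⟩ q ⟨R, hRpos.le⟩ 0 ⟨C, hCpos.le⟩ K :=
    IsPicardLindelof.of_time_independent
      (fun x hx => by
        have hxp : dist x p < R₂ := lt_of_lt_of_le (Metric.mem_ball.1 (hsub hx)) (min_le_right _ _)
        have hd := hbdd hxp
        rw [Real.dist_eq] at hd
        have := abs_lt.1 hd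
        show ‖V x‖ ≤ C
        rw [hCdef]
        linarith [this.2])
      (hlip.mono (hsub.trans ((Metric.ball_subset_ball (min_le_left _ _)).trans hball)))
      (by
        have h1 : t₀ + R / C - t₀ = R / C := by ring
        have h2 : t₀ - t₀ = (0:ℝ) := by ring
        simp only [NNReal.coe_mk, NNReal.coe_zero, sub_zero, h1, h2]
        rw [max_eq_left (by positivity)]
        show C * (R / C) ≤ R
        rw [mul_div_cancel₀ _ (ne_of_gt hCpos)])
  obtain ⟨δ, hδ0, hδ⟩ := hpl.exists_eq_forall_mem_Icc_hasDerivWithinAt₀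
  exact ⟨δ, hδ0, hδ⟩

end Existence

section Greedy

variable {V : H → H}

theorem exists_isSolV (hV : ContDiff ℝ 1 V) (x₀ : H) {S : ℝ}
    (hS : ∀ b γ, IsSolV V x₀ b γ → ∀ t ∈ Icc (0:ℝ) b, ‖V (γ t)‖ ≤ S)
    {T : ℝ} (hT : 0 ≤ T) : ∃ γ, IsSolV V x₀ T γ := by
  classical
  have step_exists : ∀ b : ℝ, ∀ γ : ℝ → H, 0 ≤ b → IsSolV V x₀ b γ →
      ∃ b' : ℝ, ∃ γ' : ℝ → H, (0 ≤ b' ∧ IsSolV V x₀ b' γ') ∧ b ≤ b' ∧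
        EqOn γ γ' (Icc 0 b) ∧
        ∀ e : ℝ, 0 < e → e ≤ 1 →
          (∃ γ'', IsSolV V x₀ (b + e) γ'' ∧ EqOn γ γ'' (Icc 0 b)) → e ≤ 2 * (b' - b) := by
    intro b γ hb hsol
    set Av : Set ℝ := {e : ℝ | 0 < e ∧ e ≤ 1 ∧
      ∃ γ'', IsSolV V x₀ (b + e) γ'' ∧ EqOn γ γ'' (Icc 0 b)} with hAv
    obtain ⟨r, hr, e₀, he₀, hloc⟩ := local_sol hV (γ b)
    obtain ⟨δ, hδ0, hδ⟩ := hloc (γ b) (Metric.mem_closedBall_self hr.le) b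
    have hglue := hsol.glue hb (le_add_of_nonneg_right he₀.le) hδ0 hδ
    have hmem : min e₀ 1 ∈ Av := by
      refine ⟨lt_min he₀ zero_lt_one, min_le_right _ _,
        ⟨_, hglue.restrict (by linarith [min_le_left e₀ 1]), ?_⟩⟩
      intro s hs
      exact (if_pos hs.2).symm
    have hbdd : BddAbove Av := ⟨1, fun e he => he.2.1⟩
    have hne : Av.Nonempty := ⟨_, hmem⟩
    have hpos : 0 < sSup Av :=
      lt_of_lt_of_le (lt_min he₀ zero_lt_one) (le_csSup hbdd hmem)
    obtain ⟨e, heAv, he2⟩ := exists_lt_of_lt_csSup hne (half_lt_self hpos)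
    obtain ⟨hepos, he1, γ'', hsol'', heq''⟩ := heAv
    refine ⟨b + e, γ'', ⟨by linarith, hsol''⟩, by linarith, heq'', ?_⟩
    intro e' he'pos he'1 hex
    have hmem' : e' ∈ Av := ⟨he'pos, he'1, hex⟩
    have := le_csSup hbdd hmem'
    linarith
  -- the iterated sequence
  have stepP : ∀ p : {p : ℝ × (ℝ → H) // 0 ≤ p.1 ∧ IsSolV V x₀ p.1 p.2},
      ∃ p' : {p : ℝ × (ℝ → H) // 0 ≤ p.1 ∧ IsSolV V x₀ p.1 p.2},
        p.1.1 ≤ p'.1.1 ∧ EqOn p.1.2 p'.1.2 (Icc 0 p.1.1) ∧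
        ∀ e : ℝ, 0 < e → e ≤ 1 →
          (∃ γ'', IsSolV V x₀ (p.1.1 + e) γ'' ∧ EqOn p.1.2 γ'' (Icc 0 p.1.1)) →
            e ≤ 2 * (p'.1.1 - p.1.1) := by
    rintro ⟨⟨b, γ⟩, hb, hsol⟩
    obtain ⟨b', γ', hgood, hle, heqon, hbound⟩ := step_exists b γ hb hsol
    exact ⟨⟨(b', γ'), hgood⟩, hle, heqon, hbound⟩
  choose step hstep1 hstep2 hstep3 using stepP
  set σ : ℕ → {p : ℝ × (ℝ → H) // 0 ≤ p.1 ∧ IsSolV V x₀ p.1 p.2} :=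
    fun n => step^[n] ⟨(0, fun _ => x₀), le_rfl, isSolV_zero V x₀⟩ with hσ
  have hσsucc : ∀ n, σ (n+1) = step (σ n) := by
    intro n
    rw [hσ]
    exact Function.iterate_succ_apply' _ _ _
  have h0b : ∀ n, 0 ≤ (σ n).1.1 := fun n => (σ n).2.1
  have hsols : ∀ n, IsSolV V x₀ (σ n).1.1 (σ n).1.2 := fun n => (σ n).2.2
  have hmono : ∀ n, (σ n).1.1 ≤ (σ (n+1)).1.1 := by
    intro n
    rw [hσsucc n]
    exact hstep1 (σ n)
  have bmono : Monotone (fun n => (σ n).1.1) := monotone_nat_of_le_succ hmono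
  have hEqOn : ∀ n m, n ≤ m → EqOn ((σ n).1.2) ((σ m).1.2) (Icc 0 ((σ n).1.1)) := by
    intro n m hnm
    induction m, hnm using Nat.le_induction with
    | base => exact fun s _ => rfl
    | succ m hm ih =>
      have hstep : EqOn ((σ m).1.2) ((σ (m+1)).1.2) (Icc 0 ((σ m).1.1)) := by
        rw [hσsucc m]
        exact hstep2 (σ m)
      intro s hs
      exact (ih hs).trans (hstep (Icc_subset_Icc_right (bmono hm) hs))
  by_cases hbig : ∃ n, T ≤ (σ n).1.1
  · obtain ⟨n, hn⟩ := hbig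
    exact ⟨(σ n).1.2, (hsols n).restrict hn⟩
  · push_neg at hbig
    exfalso
    have hbdd : BddAbove (Set.range fun n => (σ n).1.1) := by
      refine ⟨T, ?_⟩
      rintro _ ⟨n, rfl⟩
      exact (hbig n).le
    have hcv : Tendsto (fun n => (σ n).1.1) atTop (𝓝 (⨆ n, (σ n).1.1)) :=
      tendsto_atTop_ciSup bmono hbdd
    have hble : ∀ n, (σ n).1.1 ≤ ⨆ n, (σ n).1.1 := fun n => le_ciSup hbdd n
    set tinf := ⨆ n, (σ n).1.1 with htinf
    set pt : ℕ → H := fun n => (σ n).1.2 ((σ n).1.1) with hpt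
    set S' : ℝ := max S 0 with hS'
    have hdista : ∀ n m, n ≤ m → dist (pt n) (pt m) ≤ S' * ((σ m).1.1 - (σ n).1.1) := by
      intro n m hnm
      have heq1 : pt n = (σ m).1.2 ((σ n).1.1) := hEqOn n m hnm ⟨h0b n, le_rfl⟩
      have hseg : ∀ t ∈ Icc ((σ n).1.1) ((σ m).1.1),
          HasDerivWithinAt ((σ m).1.2) (V ((σ m).1.2 t)) (Icc ((σ n).1.1) ((σ m).1.1)) t := by
        intro t ht
        exact ((hsols m).2 t ⟨(h0b n).trans ht.1, ht.2⟩).mono (Icc_subset_Icc_left (h0b n))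
      have hbound : ∀ t ∈ Ico ((σ n).1.1) ((σ m).1.1), ‖V ((σ m).1.2 t)‖ ≤ S' := by
        intro t ht
        exact (hS _ _ (hsols m) t ⟨(h0b n).trans ht.1, ht.2.le⟩).trans (le_max_left _ _)
      have hkey := norm_image_sub_le_of_norm_deriv_le_segment' hseg hbound
        ((σ m).1.1) (right_mem_Icc.2 (bmono hnm))
      rw [dist_eq_norm, heq1, norm_sub_rev]
      exact hkey
    have hcauchy : CauchySeq pt := by
      apply cauchySeq_of_le_tendsto_0 (fun N => S' * (tinf - (σ N).1.1))
      · intro n m N hn hm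
        have hSnn : 0 ≤ S' := le_max_right S 0
        rcases le_total n m with h | h
        · refine (hdista n m h).trans ?_
          apply mul_le_mul_of_nonneg_left _ hSnn
          have h1 := bmono hn
          have h2 := hble m
          simp only at h1 h2 ⊢
          linarith
        · rw [dist_comm]
          refine (hdista m n h).trans ?_
          apply mul_le_mul_of_nonneg_left _ hSnn
          have h1 := bmono hm
          have h2 := hble n
          simp only at h1 h2 ⊢
          linarith
      · have h1 : Tendsto (fun N => tinf - (σ N).1.1) atTop (𝓝 (tinf - tinf)) :=
          tendsto_const_nhds.sub hcv
        rw [sub_self] at h1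
        have h2 := h1.const_mul S'
        rwa [mul_zero] at h2
    obtain ⟨pinf, hpinf⟩ := cauchySeq_tendsto_of_complete hcauchy
    obtain ⟨r, hr, e₀, he₀, hloc⟩ := local_sol hV pinf
    have hevmem : ∀ᶠ n in atTop, pt n ∈ Metric.closedBall pinf r := by
      have hnb : Metric.closedBall pinf r ∈ 𝓝 pinf := Metric.closedBall_mem_nhds _ hr
      exact hpinf.eventually (Filter.eventually_mem_set.2 hnb)
    obtain ⟨N, hN⟩ := eventually_atTop.1 hevmem
    set ebar := min e₀ 1 with hebar
    have hebarpos : 0 < ebar := lt_min he₀ zero_lt_one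
    have hstepge : ∀ n, N ≤ n → ebar / 2 ≤ (σ (n+1)).1.1 - (σ n).1.1 := by
      intro n hn
      obtain ⟨δ, hδ0, hδ⟩ := hloc (pt n) (hN n hn) ((σ n).1.1)
      have hglue := (hsols n).glue (h0b n) (le_add_of_nonneg_right he₀.le) hδ0 hδ
      have hwit : ∃ γ'', IsSolV V x₀ ((σ n).1.1 + ebar) γ''
          ∧ EqOn ((σ n).1.2) γ'' (Icc 0 ((σ n).1.1)) := by
        refine ⟨_, hglue.restrict (by linarith [min_le_left e₀ 1]), ?_⟩
        intro s hs
        exact (if_pos hs.2).symm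
      have hb3 := hstep3 (σ n) ebar hebarpos (min_le_right _ _) hwit
      rw [← hσsucc n] at hb3
      linarith
    have hgrow : ∀ k : ℕ, (σ N).1.1 + k * (ebar / 2) ≤ (σ (N + k)).1.1 := by
      intro k
      induction k with
      | zero => simp
      | succ k ih =>
        have h1 := hstepge (N + k) (Nat.le_add_right N k)
        have h2 : N + (k+1) = (N + k) + 1 := rfl
        rw [h2]
        push_cast
        push_cast at ih
        linarith
    obtain ⟨k, hk⟩ := exists_nat_gt ((T - (σ N).1.1) / (ebar / 2))
    have h1 := hgrow k
    have h2 := hbig (N + k)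
    rw [div_lt_iff₀ (by positivity)] at hk
    linarith

end Greedy

/-! ### Core inequality and conclusion -/

theorem core_ineq {f g : H → ℝ} (hf : ContDiff ℝ 2 f) (hg : ContDiff ℝ 2 g)
    (hcf : ConvexOn ℝ univ f) (hcg : ConvexOn ℝ univ g)
    (heq : ∀ z : H, ‖gradient f z‖ = ‖gradient g z‖)
    (x₀ z : H) {T : ℝ} (hT : 0 < T) {γ : ℝ → H}
    (hγ0 : γ 0 = x₀)
    (hsol : ∀ t ∈ Icc (0:ℝ) T, HasDerivWithinAt γ (-(gradient f (γ t))) (Icc 0 T) t) :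
    ‖gradient f x₀ - gradient g x₀‖^2
      ≤ 4 * ((f x₀ - f z + ‖gradient f z‖ * (‖x₀ - z‖ + ‖gradient f x₀‖ * T)) / T) := by
  have hT' : (0:ℝ) ≤ T := hT.le
  have h0 : (0:ℝ) ∈ Icc (0:ℝ) T := left_mem_Icc.2 hT'
  have hTT : T ∈ Icc (0:ℝ) T := right_mem_Icc.2 hT'
  have he := eSq_monotone hf hg hcg heq hsol h0 hTT hT'
  simp only [real_inner_self_eq_norm_sq, hγ0] at he
  have hnorm : ‖gradient f (γ T) - gradient g (γ T)‖ ≤ 2 * ‖gradient f (γ T)‖ := by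
    calc ‖gradient f (γ T) - gradient g (γ T)‖
        ≤ ‖gradient f (γ T)‖ + ‖gradient g (γ T)‖ := norm_sub_le _ _
      _ = 2 * ‖gradient f (γ T)‖ := by rw [← heq (γ T)]; ring
  have hsq : ‖gradient f (γ T) - gradient g (γ T)‖^2 ≤ 4 * ‖gradient f (γ T)‖^2 := by
    nlinarith [norm_nonneg (gradient f (γ T) - gradient g (γ T)), norm_nonneg (gradient f (γ T))]
  have hval := value_decay hf hcf hsol hT'
  simp only [real_inner_self_eq_norm_sq, hγ0] at hval
  have hgi := grad_ineq hf hcf z (γ T)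
  have hcs : -(‖gradient f z‖ * ‖γ T - z‖) ≤ ⟪gradient f z, γ T - z⟫ := by
    have h1 := abs_real_inner_le_norm (gradient f z) (γ T - z)
    have h2 := neg_abs_le (⟪gradient f z, γ T - z⟫)
    linarith
  have hdisp := displacement hf hcf hsol hT'
  rw [hγ0] at hdisp
  have htri : ‖γ T - z‖ ≤ ‖x₀ - z‖ + ‖gradient f x₀‖ * T := by
    have hsplit : γ T - z = (γ T - x₀) + (x₀ - z) := by abel
    calc ‖γ T - z‖ = ‖(γ T - x₀) + (x₀ - z)‖ := by rw [hsplit]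
      _ ≤ ‖γ T - x₀‖ + ‖x₀ - z‖ := norm_add_le _ _
      _ ≤ ‖gradient f x₀‖ * T + ‖x₀ - z‖ := by linarith
      _ = ‖x₀ - z‖ + ‖gradient f x₀‖ * T := by ring
  -- combine
  have hlow : f z - ‖gradient f z‖ * (‖x₀ - z‖ + ‖gradient f x₀‖ * T) ≤ f (γ T) := by
    have hmul : ‖gradient f z‖ * ‖γ T - z‖
        ≤ ‖gradient f z‖ * (‖x₀ - z‖ + ‖gradient f x₀‖ * T) :=
      mul_le_mul_of_nonneg_left htri (norm_nonneg _)
    linarith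
  have hρ : ‖gradient f (γ T)‖^2
      ≤ (f x₀ - f z + ‖gradient f z‖ * (‖x₀ - z‖ + ‖gradient f x₀‖ * T)) / T := by
    rw [le_div_iff₀ hT]
    nlinarith
  calc ‖gradient f x₀ - gradient g x₀‖^2
      ≤ ‖gradient f (γ T) - gradient g (γ T)‖^2 := he
    _ ≤ 4 * ‖gradient f (γ T)‖^2 := hsq
    _ ≤ 4 * ((f x₀ - f z + ‖gradient f z‖ * (‖x₀ - z‖ + ‖gradient f x₀‖ * T)) / T) := by
        linarith

theorem grad_eq_grad {f g : H → ℝ} (hf : ContDiff ℝ 2 f) (hg : ContDiff ℝ 2 g)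
    (hcf : ConvexOn ℝ univ f) (hcg : ConvexOn ℝ univ g)
    (heq : ∀ z : H, ‖gradient f z‖ = ‖gradient g z‖)
    (hanchor : ∀ δ : ℝ, 0 < δ → ∃ z : H, ‖gradient f z‖ < δ)
    (x₀ : H) : gradient f x₀ = gradient g x₀ := by
  -- existence of flows
  have hVc : ContDiff ℝ 1 (fun y => -(gradient f y)) := (contDiff_grad hf).neg
  have hspeed : ∀ b γ, IsSolV (fun y => -(gradient f y)) x₀ b γ →
      ∀ t ∈ Icc (0:ℝ) b, ‖(fun y => -(gradient f y)) (γ t)‖ ≤ ‖gradient f x₀‖ := by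
    intro b γ hsol t ht
    have := slope_le hf hcf hsol.2 ht
    rw [hsol.1] at this
    simpa using this
  set E := ‖gradient f x₀ - gradient g x₀‖^2 with hE
  set Sx := ‖gradient f x₀‖ with hSx
  -- key bound: for every anchor z and every T > 0
  have hkey : ∀ z : H, ∀ T : ℝ, 0 < T →
      E ≤ 4 * (f x₀ - f z + ‖gradient f z‖ * ‖x₀ - z‖) / T + 4 * ‖gradient f z‖ * Sx := by
    intro z T hTpos
    obtain ⟨γ, hsol⟩ := exists_isSolV hVc x₀ hspeed hTpos.le
    have hc := core_ineq hf hg hcf hcg heq x₀ z hTpos hsol.1 hsol.2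
    have halg : 4 * ((f x₀ - f z + ‖gradient f z‖ * (‖x₀ - z‖ + Sx * T)) / T)
        = 4 * (f x₀ - f z + ‖gradient f z‖ * ‖x₀ - z‖) / T + 4 * ‖gradient f z‖ * Sx := by
      field_simp
      ring
    rw [← hSx, halg] at hc
    exact hc
  -- now E ≤ 4 δ Sx for all δ > 0
  have hE2 : ∀ δ : ℝ, 0 < δ → E ≤ 4 * δ * Sx + δ := by
    intro δ hδ
    obtain ⟨z, hz⟩ := hanchor δ hδ
    set C := 4 * (f x₀ - f z + ‖gradient f z‖ * ‖x₀ - z‖) with hC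
    set T := max 1 (C / δ + 1) with hTdef
    have hT1 : (1:ℝ) ≤ T := le_max_left _ _
    have hTpos : 0 < T := lt_of_lt_of_le zero_lt_one hT1
    have h1 := hkey z T hTpos
    have hCT : C / T ≤ δ := by
      rcases le_or_gt C 0 with hC0 | hC0
      · have : C / T ≤ 0 := div_nonpos_of_nonpos_of_nonneg hC0 hTpos.le
        linarith
      · have hT2 : C / δ + 1 ≤ T := le_max_right _ _
        rw [div_le_iff₀ hTpos]
        have : C / δ < T := by linarith
        rw [div_lt_iff₀ hδ] at this
        linarith
    have hmul : 4 * ‖gradient f z‖ * Sx ≤ 4 * δ * Sx := by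
      apply mul_le_mul_of_nonneg_right _ (norm_nonneg _)
      linarith
    linarith
  have hSnn : 0 ≤ Sx := norm_nonneg _
  have hEnn : 0 ≤ E := sq_nonneg _
  have hE0 : E = 0 := by
    by_contra hne
    have hEpos : 0 < E := lt_of_le_of_ne hEnn (Ne.symm hne)
    have := hE2 (E / (4 * Sx + 2)) (by positivity)
    have h4 : 4 * (E / (4 * Sx + 2)) * Sx + E / (4 * Sx + 2) < E := by
      have hden : (0:ℝ) < 4 * Sx + 2 := by positivity
      have heqn : 4 * (E / (4 * Sx + 2)) * Sx + E / (4 * Sx + 2)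
          = E / (4 * Sx + 2) * (4 * Sx + 1) := by ring
      rw [heqn, div_mul_eq_mul_div, div_lt_iff₀ hden]
      nlinarith
    linarith
  have := pow_eq_zero_iff (n := 2) (by norm_num) |>.1 hE0
  exact sub_eq_zero.1 (norm_eq_zero.1 this)

end Stmt14


open Filter MeasureTheory Set

/-- Theorem 2 (determination via modulus of gradient): if `ψ₁, ψ₂` are convex `C²`
functions with `‖∇ψ₁(z)‖ = ‖∇ψ₂(z)‖` for all `z` and `inf_z ‖∇ψ₁(z)‖ = 0`, then
`ψ₁ = ψ₂ + c` for some constant `c ∈ ℝ`. -/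
theorem stmt_14 {H : Type*} [NormedAddCommGroup H] [InnerProductSpace ℝ H] [CompleteSpace H]
    (ψ₁ ψ₂ : H → ℝ) (hψ₁ : ContDiff ℝ 2 ψ₁) (hψ₂ : ContDiff ℝ 2 ψ₂)
    (hconv₁ : ConvexOn ℝ univ ψ₁) (hconv₂ : ConvexOn ℝ univ ψ₂)
    (heq : ∀ z : H, ‖gradient ψ₁ z‖ = ‖gradient ψ₂ z‖)
    (hinf : ⨅ z : H, ‖gradient ψ₁ z‖ = 0) :
    ∃ c : ℝ, ∀ x : H, ψ₁ x = ψ₂ x + c := by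
  classical
  have hanchor : ∀ δ : ℝ, 0 < δ → ∃ z : H, ‖gradient ψ₁ z‖ < δ := by
    intro δ hδ
    by_contra hcon
    push_neg at hcon
    have : δ ≤ ⨅ z : H, ‖gradient ψ₁ z‖ := le_ciInf hcon
    rw [hinf] at this
    linarith
  have hgrads : ∀ x : H, gradient ψ₁ x = gradient ψ₂ x :=
    Stmt14.grad_eq_grad hψ₁ hψ₂ hconv₁ hconv₂ heq hanchor
  have hdiff : Differentiable ℝ (fun x => ψ₁ x - ψ₂ x) :=
    (hψ₁.differentiable two_ne_zero).sub (hψ₂.differentiable two_ne_zero)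
  have hgd : ∀ (f : H → ℝ) (x : H),
      (InnerProductSpace.toDual ℝ H) (gradient f x) = fderiv ℝ f x := by
    intro f x
    rw [show gradient f x = (InnerProductSpace.toDual ℝ H).symm (fderiv ℝ f x) from rfl,
      LinearIsometryEquiv.apply_symm_apply]
  have hfd : ∀ x : H, fderiv ℝ (fun y => ψ₁ y - ψ₂ y) x = 0 := by
    intro x
    have h1 : DifferentiableAt ℝ ψ₁ x := (hψ₁.differentiable two_ne_zero) x
    have h2 : DifferentiableAt ℝ ψ₂ x := (hψ₂.differentiable two_ne_zero) x
    rw [fderiv_fun_sub h1 h2]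
    have h3 : fderiv ℝ ψ₁ x = fderiv ℝ ψ₂ x := by
      have h4 := congrArg (InnerProductSpace.toDual ℝ H) (hgrads x)
      rwa [hgd ψ₁ x, hgd ψ₂ x] at h4
    rw [h3, sub_self]
  refine ⟨ψ₁ 0 - ψ₂ 0, fun x => ?_⟩
  have hconst := is_const_of_fderiv_eq_zero hdiff hfd x 0
  linarith [hconst]
end

section
/- Assume V(x) = ½‖∇ψ(x)‖² is convex, and let v₁, v₂ be two strongly evanescent solutions of the second-order gradient system (DS-2). Then the function q(t) = ½‖v₁(t) − v₂(t)‖² is convex and nonincreasing on [0, ∞); in particular, if v₁(0) = v₂(0) then v₁ = v₂. -/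
open Filter MeasureTheory Set Topology RealInnerProductSpace



-- subgradient inequality for convex differentiable functions
lemma aux_subgrad_s16 {H : Type*} [NormedAddCommGroup H] [InnerProductSpace ℝ H] [CompleteSpace H]
    {V : H → ℝ} (hd : Differentiable ℝ V) (hc : ConvexOn ℝ univ V) (x y : H) :
    ⟪gradient V x, y - x⟫ ≤ V y - V x := by
  have hline : HasDerivAt (fun t : ℝ => x + t • (y - x)) (y - x) 0 := by
    simpa using ((hasDerivAt_id (0:ℝ)).smul_const (y - x)).const_add x
  have hφ : HasDerivAt (fun t : ℝ => V (x + t • (y - x))) (fderiv ℝ V x (y - x)) 0 := by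
    have := ((hd (x + (0:ℝ) • (y - x))).hasFDerivAt).comp_hasDerivAt 0 hline
    simpa [Function.comp_def] using this
  have hval : ⟪gradient V x, y - x⟫ = fderiv ℝ V x (y - x) :=
    InnerProductSpace.toDual_symm_apply
  rw [hval]
  have htend : Tendsto (slope (fun t : ℝ => V (x + t • (y - x))) 0) (𝓝[>] 0)
      (𝓝 (fderiv ℝ V x (y - x))) :=
    (hasDerivAt_iff_tendsto_slope.1 hφ).mono_left
      (nhdsWithin_mono 0 (fun t ht => ne_of_gt ht))
  refine le_of_tendsto htend ?_
  filter_upwards [Ioo_mem_nhdsGT_of_mem (Set.left_mem_Ico.2 one_pos)] with t ht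
  have hcv := hc.2 (mem_univ x) (mem_univ y) (by linarith [ht.2] : (0:ℝ) ≤ 1 - t)
    ht.1.le (by ring)
  have he : (1 - t) • x + t • y = x + t • (y - x) := by
    rw [smul_sub, sub_smul, one_smul]; abel
  rw [he] at hcv
  have h0 : x + (0:ℝ) • (y - x) = x := by simp
  rw [slope_def_field, h0, sub_zero, div_le_iff₀ ht.1]
  simp only [smul_eq_mul] at hcv
  nlinarith [ht.1]

lemma aux_gradmono {H : Type*} [NormedAddCommGroup H] [InnerProductSpace ℝ H] [CompleteSpace H]
    {V : H → ℝ} (hd : Differentiable ℝ V) (hc : ConvexOn ℝ univ V) (x y : H) :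
    0 ≤ ⟪x - y, gradient V x - gradient V y⟫ := by
  have h1 := aux_subgrad_s16 hd hc x y
  have h2 := aux_subgrad_s16 hd hc y x
  have hx : (x - y) = -(y - x) := by abel
  rw [inner_sub_right, real_inner_comm (gradient V x) (x - y),
    real_inner_comm (gradient V y) (x - y), hx, inner_neg_right, inner_neg_right]
  rw [hx, inner_neg_right] at h2
  linarith

lemma aux_Vdiff {H : Type*} [NormedAddCommGroup H] [InnerProductSpace ℝ H] [CompleteSpace H]
    {ψ : H → ℝ} (hψ : ContDiff ℝ 2 ψ)
    {V : H → ℝ} (hV : V = fun x => (1/2 : ℝ) * ‖gradient ψ x‖ ^ 2) :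
    Differentiable ℝ V := by
  have hG : ContDiff ℝ 1 (gradient ψ) := by
    have h1 : ContDiff ℝ 1 (fderiv ℝ ψ) := hψ.fderiv_right (by norm_num)
    exact (InnerProductSpace.toDual ℝ H).symm.contDiff.comp h1
  rw [hV]
  exact ((contDiff_const.mul (hG.norm_sq ℝ)).differentiable (by norm_num))


/-- Proposition 6 (contraction of solutions of (DS-2)): if `V = ½‖∇ψ‖²` is convex and
`v₁, v₂` are strongly evanescent solutions of `v'' = ∇V(v)`, then
`q(t) = ½‖v₁(t) - v₂(t)‖²` is convex and nonincreasing on `[0, ∞)`; in particular, if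
`v₁(0) = v₂(0)`, then `v₁ = v₂` on `[0, ∞)`. -/
theorem stmt_16 {H : Type*} [NormedAddCommGroup H] [InnerProductSpace ℝ H] [CompleteSpace H]
    (ψ : H → ℝ) (hψ : ContDiff ℝ 2 ψ)
    (V : H → ℝ) (hV : V = fun x => (1/2 : ℝ) * ‖gradient ψ x‖ ^ 2)
    (hVconv : ConvexOn ℝ univ V)
    (v₁ v₁' v₂ v₂' : ℝ → H)
    (hv₁ : ∀ t ∈ Ici (0:ℝ), HasDerivWithinAt v₁ (v₁' t) (Ici 0) t)
    (hv₁' : ∀ t ∈ Ici (0:ℝ), HasDerivWithinAt v₁' (gradient V (v₁ t)) (Ici 0) t)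
    (hv₂ : ∀ t ∈ Ici (0:ℝ), HasDerivWithinAt v₂ (v₂' t) (Ici 0) t)
    (hv₂' : ∀ t ∈ Ici (0:ℝ), HasDerivWithinAt v₂' (gradient V (v₂ t)) (Ici 0) t)
    (hev₁ : IntegrableOn (fun t => ‖v₁' t‖ ^ 2 + V (v₁ t)) (Ioi 0))
    (hev₂ : IntegrableOn (fun t => ‖v₂' t‖ ^ 2 + V (v₂ t)) (Ioi 0)) :
    ConvexOn ℝ (Ici 0) (fun t => (1/2 : ℝ) * ‖v₁ t - v₂ t‖ ^ 2) ∧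
      AntitoneOn (fun t => (1/2 : ℝ) * ‖v₁ t - v₂ t‖ ^ 2) (Ici 0) ∧
      (v₁ 0 = v₂ 0 → ∀ t ≥ (0:ℝ), v₁ t = v₂ t) := by
  have hVd : Differentiable ℝ V := aux_Vdiff hψ hV
  have hVnn : ∀ y : H, 0 ≤ V y := by intro y; rw [hV]; positivity
  set p : ℝ → ℝ := fun t => ⟪v₁ t - v₂ t, v₁' t - v₂' t⟫ with hpdef
  set p' : ℝ → ℝ := fun t => ‖v₁' t - v₂' t‖ ^ 2 +
      ⟪v₁ t - v₂ t, gradient V (v₁ t) - gradient V (v₂ t)⟫ with hp'def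
  have hwD : ∀ t ∈ Ici (0:ℝ), HasDerivWithinAt (fun s => v₁ s - v₂ s)
      (v₁' t - v₂' t) (Ici 0) t := fun t ht => (hv₁ t ht).sub (hv₂ t ht)
  have hw'D : ∀ t ∈ Ici (0:ℝ), HasDerivWithinAt (fun s => v₁' s - v₂' s)
      (gradient V (v₁ t) - gradient V (v₂ t)) (Ici 0) t :=
    fun t ht => (hv₁' t ht).sub (hv₂' t ht)
  have hqD : ∀ t ∈ Ici (0:ℝ), HasDerivWithinAt
      (fun s => (1/2:ℝ) * ‖v₁ s - v₂ s‖ ^ 2) (p t) (Ici 0) t := by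
    intro t ht
    have h := ((hwD t ht).norm_sq).const_mul (1/2 : ℝ)
    refine h.congr_deriv ?_
    rw [hpdef]
    simp only [real_inner_smul_left]
    ring
  have hpD : ∀ t ∈ Ici (0:ℝ), HasDerivWithinAt p (p' t) (Ici 0) t := by
    intro t ht
    have h := (hwD t ht).inner ℝ (hw'D t ht)
    refine h.congr_deriv ?_
    rw [hp'def, real_inner_self_eq_norm_sq]
    ring
  have hp'nn : ∀ t, 0 ≤ p' t := by
    intro t
    have h1 := aux_gradmono hVd hVconv (v₁ t) (v₂ t)
    have h2 : (0:ℝ) ≤ ‖v₁' t - v₂' t‖ ^ 2 := sq_nonneg _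
    simp only [hp'def]
    linarith
  have hqc : ContinuousOn (fun s => (1/2:ℝ) * ‖v₁ s - v₂ s‖ ^ 2) (Ici 0) :=
    fun t ht => (hqD t ht).continuousWithinAt
  have hpc : ContinuousOn p (Ici 0) := fun t ht => (hpD t ht).continuousWithinAt
  have hconv : ConvexOn ℝ (Ici 0) (fun s => (1/2:ℝ) * ‖v₁ s - v₂ s‖ ^ 2) :=
    convexOn_of_hasDerivWithinAt2_nonneg (convex_Ici 0) hqc
      (fun x hx => (hqD x (interior_subset hx)).mono interior_subset)
      (fun x hx => (hpD x (interior_subset hx)).mono interior_subset)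
      (fun x _ => hp'nn x)
  have hpmono : MonotoneOn p (Ici 0) :=
    monotoneOn_of_hasDerivWithinAt_nonneg (convex_Ici 0) hpc
      (fun x hx => (hpD x (interior_subset hx)).mono interior_subset)
      (fun x _ => hp'nn x)
  have hw'c : ContinuousOn (fun t => ‖v₁' t - v₂' t‖ ^ 2) (Ici 0) := by
    have h : ContinuousOn (fun s => v₁' s - v₂' s) (Ici 0) :=
      fun t ht => (hw'D t ht).continuousWithinAt
    exact h.norm.pow 2
  have hIw : IntegrableOn (fun t => ‖v₁' t - v₂' t‖ ^ 2) (Ioi 0) := by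
    apply Integrable.mono' ((hev₁.add hev₂).const_mul 2)
    · exact (hw'c.mono Ioi_subset_Ici_self).aestronglyMeasurable measurableSet_Ioi
    · refine ae_of_all _ fun t => ?_
      rw [Real.norm_of_nonneg (by positivity)]
      have h1 : ‖v₁' t - v₂' t‖ ≤ ‖v₁' t‖ + ‖v₂' t‖ := norm_sub_le _ _
      have h2 := hVnn (v₁ t)
      have h3 := hVnn (v₂ t)
      simp only [Pi.add_apply]
      nlinarith [norm_nonneg (v₁' t), norm_nonneg (v₂' t), norm_nonneg (v₁' t - v₂' t),
        mul_self_le_mul_self (norm_nonneg (v₁' t - v₂' t)) h1,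
        sq_nonneg (‖v₁' t‖ - ‖v₂' t‖)]
  have hple : ∀ t ∈ Ici (0:ℝ), p t ≤ 0 := by
    by_contra hcon
    push_neg at hcon
    obtain ⟨t₁, ht₁, hc⟩ := hcon
    -- q t₁ > 0
    have hwpos : 0 < ‖v₁ t₁ - v₂ t₁‖ := by
      rcases eq_or_lt_of_le (norm_nonneg (v₁ t₁ - v₂ t₁)) with h | h
      · exfalso
        have h0 : v₁ t₁ - v₂ t₁ = 0 := by
          rw [← norm_le_zero_iff]; rw [← h]
        rw [hpdef] at hc
        simp only [h0, inner_zero_left] at hc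
        exact lt_irrefl 0 hc
      · exact h
    have hq1pos : 0 < (1/2:ℝ) * ‖v₁ t₁ - v₂ t₁‖ ^ 2 := by positivity
    -- growth: q T ≥ q t₁ + c (T - t₁)
    have hgrow : ∀ T, t₁ ≤ T →
        (1/2:ℝ) * ‖v₁ t₁ - v₂ t₁‖ ^ 2 + p t₁ * (T - t₁) ≤
          (1/2:ℝ) * ‖v₁ T - v₂ T‖ ^ 2 := by
      intro T hT
      have hsub : Ici t₁ ⊆ Ici (0:ℝ) := Ici_subset_Ici.2 ht₁
      have hsub' : interior (Ici t₁) ⊆ Ici (0:ℝ) := interior_subset.trans hsub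
      have hr : MonotoneOn (fun s => (1/2:ℝ) * ‖v₁ s - v₂ s‖ ^ 2 - p t₁ * s) (Ici t₁) := by
        apply monotoneOn_of_hasDerivWithinAt_nonneg (convex_Ici t₁)
          (f' := fun s => p s - p t₁)
        · exact (hqc.mono hsub).sub (continuousOn_const.mul continuousOn_id)
        · intro x hx
          have hlin : HasDerivWithinAt (fun s : ℝ => p t₁ * s) (p t₁) (interior (Ici t₁)) x := by
            simpa using (hasDerivWithinAt_id x (interior (Ici t₁))).const_mul (p t₁)
          exact (((hqD x (hsub' hx)).mono hsub').sub hlin)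
        · intro x hx
          rw [interior_Ici] at hx
          have := hpmono ht₁ (hsub (mem_Ici.2 (le_of_lt hx))) (le_of_lt hx)
          linarith
      have h := hr (self_mem_Ici) hT hT
      simp only at h
      linarith
    set M := ∫ t in Ioi (0:ℝ), ‖v₁' t - v₂' t‖ ^ 2 with hM
    set Q₁ := (1/2:ℝ) * ‖v₁ t₁ - v₂ t₁‖ ^ 2 with hQ₁
    set c := p t₁ with hcdef
    set T := t₁ + Q₁ * Real.exp (2 * M / c) / c with hTdef
    have hTgt : t₁ < T := by
      have h : 0 < Q₁ * Real.exp (2 * M / c) / c := by positivity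
      rw [hTdef]; linarith
    have hsubIcc : Icc t₁ T ⊆ Ici (0:ℝ) := fun x hx => le_trans ht₁ hx.1
    have hqpos : ∀ s ∈ Icc t₁ T, 0 < (1/2:ℝ) * ‖v₁ s - v₂ s‖ ^ 2 := by
      intro s hs
      have h := hgrow s hs.1
      nlinarith [mul_nonneg hc.le (sub_nonneg.2 hs.1)]
    have hpge : ∀ s ∈ Icc t₁ T, c ≤ p s := fun s hs => hpmono ht₁ (hsubIcc hs) hs.1
    have hLd : ∀ x ∈ Ioo t₁ T, HasDerivWithinAt
        (fun s => Real.log ((1/2:ℝ) * ‖v₁ s - v₂ s‖ ^ 2))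
        (p x / ((1/2:ℝ) * ‖v₁ x - v₂ x‖ ^ 2)) (Ioi x) x := by
      intro x hx
      have hx0 : x ∈ Ici (0:ℝ) := le_trans ht₁ hx.1.le
      have h1 : HasDerivAt (fun s => (1/2:ℝ) * ‖v₁ s - v₂ s‖ ^ 2) (p x) x :=
        (hqD x hx0).hasDerivAt (Ici_mem_nhds (lt_of_le_of_lt ht₁ hx.1))
      exact (h1.log (ne_of_gt (hqpos x ⟨hx.1.le, hx.2.le⟩))).hasDerivWithinAt
    have hLc : ContinuousOn (fun s => Real.log ((1/2:ℝ) * ‖v₁ s - v₂ s‖ ^ 2)) (Icc t₁ T) :=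
      ContinuousOn.log (hqc.mono hsubIcc) (fun s hs => ne_of_gt (hqpos s hs))
    have hdivc : ContinuousOn (fun s => p s / ((1/2:ℝ) * ‖v₁ s - v₂ s‖ ^ 2)) (Icc t₁ T) :=
      (hpc.mono hsubIcc).div (hqc.mono hsubIcc) (fun s hs => ne_of_gt (hqpos s hs))
    have hdivint : IntervalIntegrable (fun s => p s / ((1/2:ℝ) * ‖v₁ s - v₂ s‖ ^ 2))
        volume t₁ T := by
      apply ContinuousOn.intervalIntegrable
      rwa [uIcc_of_le hTgt.le]
    have hftc : ∫ y in t₁..T, (p y / ((1/2:ℝ) * ‖v₁ y - v₂ y‖ ^ 2)) =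
        Real.log ((1/2:ℝ) * ‖v₁ T - v₂ T‖ ^ 2) - Real.log ((1/2:ℝ) * ‖v₁ t₁ - v₂ t₁‖ ^ 2) :=
      intervalIntegral.integral_eq_sub_of_hasDeriv_right_of_le hTgt.le hLc hLd hdivint
    have hmono2 : ∫ y in t₁..T, (c/2) * (p y / ((1/2:ℝ) * ‖v₁ y - v₂ y‖ ^ 2)) ≤
        ∫ y in t₁..T, ‖v₁' y - v₂' y‖ ^ 2 := by
      apply intervalIntegral.integral_mono_on hTgt.le
      · apply ContinuousOn.intervalIntegrable
        rw [uIcc_of_le hTgt.le]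
        exact continuousOn_const.mul hdivc
      · apply ContinuousOn.intervalIntegrable
        rw [uIcc_of_le hTgt.le]
        exact hw'c.mono hsubIcc
      · intro s hs
        have hq := hqpos s hs
        have hp := hpge s hs
        have hinner : p s ≤ ‖v₁ s - v₂ s‖ * ‖v₁' s - v₂' s‖ := real_inner_le_norm _ _
        have hps : 0 < p s := lt_of_lt_of_le hc hp
        have heq : (c/2) * (p s / ((1/2:ℝ) * ‖v₁ s - v₂ s‖ ^ 2)) =
            (c * p s) / (2 * ((1/2:ℝ) * ‖v₁ s - v₂ s‖ ^ 2)) := by ring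
        rw [heq, div_le_iff₀ (by positivity)]
        nlinarith [mul_self_le_mul_self hps.le hinner,
          mul_le_mul_of_nonneg_right hp hps.le,
          sq_nonneg (‖v₁' s - v₂' s‖)]
    have hbound : ∫ y in t₁..T, ‖v₁' y - v₂' y‖ ^ 2 ≤ M := by
      rw [intervalIntegral.integral_of_le hTgt.le, hM]
      apply setIntegral_mono_set hIw (ae_of_all _ fun t => by positivity)
      exact HasSubset.Subset.eventuallyLE (fun x hx => lt_of_le_of_lt ht₁ hx.1)
    have hkey : (c/2) * (Real.log ((1/2:ℝ) * ‖v₁ T - v₂ T‖ ^ 2) - Real.log Q₁) ≤ M := by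
      rw [hQ₁, ← hftc, ← intervalIntegral.integral_const_mul]
      exact le_trans hmono2 hbound
    have hqT : Q₁ + c * (T - t₁) ≤ (1/2:ℝ) * ‖v₁ T - v₂ T‖ ^ 2 := hgrow T hTgt.le
    have hT1 : c * (T - t₁) = Q₁ * Real.exp (2 * M / c) := by
      rw [hTdef]
      field_simp
      ring
    have hlog : Real.log (Q₁ * Real.exp (2 * M / c)) <
        Real.log ((1/2:ℝ) * ‖v₁ T - v₂ T‖ ^ 2) := by
      apply Real.log_lt_log (by positivity)
      linarith
    rw [Real.log_mul (ne_of_gt hq1pos) (Real.exp_ne_zero _), Real.log_exp] at hlog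
    have hfin : Real.log ((1/2:ℝ) * ‖v₁ T - v₂ T‖ ^ 2) - Real.log Q₁ ≤ 2 * M / c := by
      rw [le_div_iff₀ hc]
      linarith
    linarith
  have hanti : AntitoneOn (fun s => (1/2:ℝ) * ‖v₁ s - v₂ s‖ ^ 2) (Ici 0) :=
    antitoneOn_of_hasDerivWithinAt_nonpos (convex_Ici 0) hqc
      (fun x hx => (hqD x (interior_subset hx)).mono interior_subset)
      (fun x hx => hple x (interior_subset hx))
  refine ⟨hconv, hanti, ?_⟩
  intro h0 t ht
  have h1 := hanti (self_mem_Ici) ht ht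
  simp only [h0, sub_self, norm_zero] at h1
  have h2 : (1/2:ℝ) * ‖v₁ t - v₂ t‖ ^ 2 ≤ 0 := by
    simpa using h1
  have h3 : ‖v₁ t - v₂ t‖ = 0 := by
    nlinarith [norm_nonneg (v₁ t - v₂ t), sq_nonneg ‖v₁ t - v₂ t‖]
  rw [← sub_eq_zero]
  exact norm_eq_zero.mp h3
end
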